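/- The map π sending each homeomorphism g of the circle S¹ to the induced permutation of chords (mapping the chord with endpoints x,y to the chord with endpoints g(x),g(y)) is a group isomorphism from the homeomorphism group Aut(S¹) onto the automorphism group Aut(𝒞) of the circle graph 𝒞. -/

import Mathlib

noncomputable section

/-- The unit circle in the complex plane. -/
def S1 : Set ℂ := {z : ℂ | ‖z‖ = 1}

/-- The closed segment in the plane spanned by an unordered pair of points. -/
def chordSegment : Sym2 ℂ → Set ℂ :=
  Sym2.lift ⟨fun a b => segment ℝ a b, fun a b => segment_symm ℝ a b⟩

/-- A chord of the circle: an unordered pair of two distinct points of `S1`. -/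
def Chord : Type := {p : Sym2 ℂ // (∀ z ∈ p, z ∈ S1) ∧ ¬ p.IsDiag}

/-- The circle graph: vertices are the chords of the circle, two distinct chords being
adjacent whenever their segments intersect. -/
def CircleGraph : SimpleGraph Chord where
  Adj C D := C ≠ D ∧ (chordSegment C.1 ∩ chordSegment D.1).Nonempty
  symm := ⟨fun C D ⟨h1, h2⟩ => ⟨h1.symm, by rwa [Set.inter_comm]⟩⟩
  loopless := ⟨fun C h => h.1 rfl⟩

namespace CG

open Real Set Complex

/-! ### The parametrization of the circle -/

def e (θ : ℝ) : ℂ := Complex.exp (θ * Complex.I)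

lemma e_norm (θ : ℝ) : ‖e θ‖ = 1 := by
  rw [e]
  exact Complex.norm_exp_ofReal_mul_I θ

lemma e_mem (θ : ℝ) : e θ ∈ S1 := e_norm θ

lemma e_eq_iff {θ₁ θ₂ : ℝ} : e θ₁ = e θ₂ ↔ ∃ n : ℤ, θ₁ = θ₂ + n * (2 * π) := by
  rw [e, e, Complex.exp_eq_exp_iff_exists_int]
  constructor
  · rintro ⟨n, hn⟩
    refine ⟨n, ?_⟩
    have : (θ₁ : ℂ) = θ₂ + n * (2 * π) := by
      push_cast
      linear_combination (-Complex.I) * hn + ((θ₁:ℂ) - θ₂ - 2*π*n) * Complex.I_sq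
    exact_mod_cast congrArg Complex.re this
  · rintro ⟨n, hn⟩
    exact ⟨n, by push_cast [hn]; ring⟩

lemma e_inj {θ₁ θ₂ : ℝ} (h₁₂ : |θ₁ - θ₂| < 2 * π) (h : e θ₁ = e θ₂) : θ₁ = θ₂ := by
  rcases e_eq_iff.1 h with ⟨n, hn⟩
  have hπ : (0:ℝ) < 2 * π := by positivity
  have : |(n : ℝ)| * (2 * π) < 2 * π := by
    calc |(n : ℝ)| * (2*π) = |θ₁ - θ₂| := by
          rw [hn, show θ₂ + (n:ℝ) * (2*π) - θ₂ = (n:ℝ) * (2*π) by ring, abs_mul,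
            abs_of_pos hπ]
    _ < 2 * π := h₁₂
  have hn0 : (n : ℤ) = 0 := by
    by_contra hne
    have : (1:ℝ) ≤ |(n:ℝ)| := by
      have := Int.one_le_abs (by omega : n ≠ 0)
      exact_mod_cast this
    nlinarith
  simp [hn0] at hn
  linarith [hn]

lemma exists_rep {z : ℂ} (hz : z ∈ S1) (α : ℝ) : ∃ θ ∈ Ico α (α + 2 * π), e θ = z := by
  have hz1 : ‖z‖ = 1 := hz
  have h := Complex.norm_mul_exp_arg_mul_I z
  rw [hz1] at h
  set θ₀ := Complex.arg z with hθ₀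
  have hπ : (0:ℝ) < 2 * π := by positivity
  refine ⟨toIcoMod hπ α θ₀, toIcoMod_mem_Ico hπ α θ₀, ?_⟩
  have : ∃ n : ℤ, toIcoMod hπ α θ₀ = θ₀ + n * (2 * π) := by
    refine ⟨-(toIcoDiv hπ α θ₀), ?_⟩
    rw [toIcoMod, zsmul_eq_mul]
    push_cast
    ring
  rw [show z = Complex.exp (θ₀ * Complex.I) by rw [← h]; simp]
  exact e_eq_iff.2 this

lemma exists_rep' {z : ℂ} (hz : z ∈ S1) {α : ℝ} (hne : z ≠ e α) :
    ∃ θ ∈ Ioo α (α + 2 * π), e θ = z := by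
  rcases exists_rep hz α with ⟨θ, hθ, hez⟩
  rcases eq_or_lt_of_le hθ.1 with h | h
  · exact absurd (by rw [← hez, ← h]) hne
  · exact ⟨θ, ⟨h, hθ.2⟩, hez⟩

lemma normSq_S1 {a : ℂ} (ha : a ∈ S1) : Complex.normSq a = 1 := by
  have h : ‖a‖ = 1 := ha
  rw [← Complex.sq_norm, h]; norm_num

/-! ### The cross functional -/

/-- Twice the signed area of the triangle `a b z`; the sign tells on which side of the
line `a b` the point `z` lies. -/
def xf (a b z : ℂ) : ℝ := ((starRingEnd ℂ) (b - a) * (z - a)).im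

lemma xf_affine (a b c d : ℂ) (t : ℝ) :
    xf a b ((1 - t) • c + t • d) = (1 - t) * xf a b c + t * xf a b d := by
  simp only [xf, Complex.real_smul]
  simp [Complex.mul_im, Complex.add_re, Complex.add_im, Complex.sub_re, Complex.sub_im,
    Complex.mul_re, Complex.ofReal_re, Complex.ofReal_im]
  ring

lemma norm_sq_line {a b : ℂ} (ha : a ∈ S1) (hb : b ∈ S1) (t : ℝ) :
    Complex.normSq (a + t • (b - a)) = 1 + t * (t - 1) * Complex.normSq (b - a) := by
  have ha' := normSq_S1 ha
  have hb' := normSq_S1 hb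
  simp only [Complex.normSq_apply, Complex.real_smul, Complex.add_re, Complex.add_im,
    Complex.sub_re, Complex.sub_im, Complex.mul_re, Complex.mul_im,
    Complex.ofReal_re, Complex.ofReal_im] at *
  linear_combination (1 - t) * ha' + t * hb' 

lemma xf_line (a b : ℂ) (t : ℝ) : xf a b (a + t • (b - a)) = 0 := by
  simp only [xf, add_sub_cancel_left, Complex.real_smul]
  simp [Complex.mul_im, Complex.mul_re, Complex.conj_re, Complex.conj_im]
  ring

lemma comb_eq (a b : ℂ) (t : ℝ) : (1 - t) • a + t • b = a + t • (b - a) := by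
  rw [Complex.real_smul, Complex.real_smul, Complex.real_smul]
  push_cast
  ring

lemma exists_param_of_xf_zero {a b z : ℂ} (hab : a ≠ b) (h : xf a b z = 0) :
    ∃ t : ℝ, z = a + t • (b - a) := by
  set w := (starRingEnd ℂ) (b - a) * (z - a) with hw
  have hwim : w.im = 0 := h
  have hba : (b - a) ≠ 0 := sub_ne_zero.2 (Ne.symm hab)
  have hns : Complex.normSq (b - a) ≠ 0 := by simpa using hba
  have hnsC : (Complex.normSq (b - a) : ℂ) ≠ 0 := by exact_mod_cast hns
  refine ⟨w.re / Complex.normSq (b - a), ?_⟩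
  have hwre : ((w.re : ℝ) : ℂ) = w := Complex.ext rfl (by simp [hwim])
  have key : (Complex.normSq (b - a) : ℂ) * (z - a) = ((w.re : ℝ) : ℂ) * (b - a) := by
    rw [hwre, hw, Complex.normSq_eq_conj_mul_self]
    ring
  rw [Complex.real_smul]
  push_cast
  field_simp
  linear_combination key

lemma xf_zero_iff {a b z : ℂ} (ha : a ∈ S1) (hb : b ∈ S1) (hz : z ∈ S1) (hab : a ≠ b) :
    xf a b z = 0 ↔ z = a ∨ z = b := by
  constructor
  · intro h
    obtain ⟨t, ht⟩ := exists_param_of_xf_zero hab h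
    have h1 : Complex.normSq z = 1 := normSq_S1 hz
    have h2 := norm_sq_line ha hb t
    rw [← ht, h1] at h2
    have hba : (b - a) ≠ 0 := sub_ne_zero.2 (Ne.symm hab)
    have hns : Complex.normSq (b - a) ≠ 0 := by simpa using hba
    have hns' : (0:ℝ) < Complex.normSq (b - a) := by
      rcases lt_or_eq_of_le (Complex.normSq_nonneg (b-a)) with h | h
      · exact h
      · exact absurd h.symm hns
    have ht01 : t * (t - 1) = 0 := by
      by_contra hne
      have : t * (t-1) * Complex.normSq (b-a) ≠ 0 := mul_ne_zero hne hns
      apply this; linarith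
    rcases mul_eq_zero.1 ht01 with h | h
    · left; rw [ht, h]; simp
    · right; rw [ht, show t = 1 by linarith]; simp
  · rintro (h | h)
    · rw [h]; simpa using xf_line a b 0
    · rw [h]; simpa using xf_line a b 1

lemma mem_segment_iff_param {a b z : ℂ} :
    z ∈ segment ℝ a b ↔ ∃ t ∈ Set.Icc (0:ℝ) 1, z = a + t • (b - a) := by
  rw [segment_eq_image]
  constructor
  · rintro ⟨t, ht, h⟩
    exact ⟨t, ht, by rw [← h]; exact (comb_eq a b t).symm ▸ (comb_eq a b t)⟩
  · rintro ⟨t, ht, h⟩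
    refine ⟨t, ht, ?_⟩
    show (1 - t) • a + t • b = z
    rw [h, comb_eq]

lemma xf_segment_zero {a b z : ℂ} (hz : z ∈ segment ℝ a b) : xf a b z = 0 := by
  rcases mem_segment_iff_param.1 hz with ⟨t, _, rfl⟩
  exact xf_line a b t

lemma segment_subset_ball {a b : ℂ} (ha : a ∈ S1) (hb : b ∈ S1) :
    segment ℝ a b ⊆ Metric.closedBall (0:ℂ) 1 := by
  apply (convex_closedBall (0:ℂ) 1).segment_subset
  · simp only [Metric.mem_closedBall, dist_zero_right]
    exact le_of_eq ha
  · simp only [Metric.mem_closedBall, dist_zero_right]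
    exact le_of_eq hb

/-- If `c` and `d` lie strictly on opposite sides of the line through `a, b`, then the
segments `[a,b]` and `[c,d]` intersect. -/
lemma seg_inter_of_sep {a b c d : ℂ} (ha : a ∈ S1) (hb : b ∈ S1) (hc : c ∈ S1) (hd : d ∈ S1)
    (hab : a ≠ b) (hsep : xf a b c * xf a b d < 0) :
    (segment ℝ a b ∩ segment ℝ c d).Nonempty := by
  -- the function t ↦ xf a b ((1-t)c + td) changes sign on [0,1]
  set F : ℝ → ℝ := fun t => (1 - t) * xf a b c + t * xf a b d with hF
  have hcont : ContinuousOn F (Set.Icc 0 1) := by fun_prop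
  have h0 : F 0 = xf a b c := by simp [hF]
  have h1 : F 1 = xf a b d := by simp [hF]
  have : (0:ℝ) ∈ Set.uIcc (F 0) (F 1) := by
    rw [h0, h1, Set.mem_uIcc]
    rcases mul_neg_iff.1 hsep with ⟨h₁, h₂⟩ | ⟨h₁, h₂⟩
    · right; exact ⟨le_of_lt h₂, le_of_lt h₁⟩
    · left; exact ⟨le_of_lt h₁, le_of_lt h₂⟩
  obtain ⟨t, ht, hFt⟩ := intermediate_value_uIcc (f := F) (a := (0:ℝ)) (b := 1)
    (by rw [Set.uIcc_of_le (by norm_num : (0:ℝ) ≤ 1)]; exact hcont) this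
  rw [Set.uIcc_of_le (by norm_num : (0:ℝ) ≤ 1)] at ht
  set x := (1 - t) • c + t • d with hx
  have hxseg : x ∈ segment ℝ c d := by
    rw [segment_eq_image]
    exact ⟨t, ht, by rw [hx]⟩
  have hxf : xf a b x = 0 := by rw [hx, xf_affine]; exact hFt
  -- x is on the line through a,b and inside the closed unit ball, hence on segment [a,b]
  obtain ⟨s, hs⟩ := exists_param_of_xf_zero hab hxf
  have hxball : Complex.normSq x ≤ 1 := by
    have := segment_subset_ball hc hd hxseg
    simp only [Metric.mem_closedBall, dist_zero_right] at this
    calc Complex.normSq x = ‖x‖^2 := by rw [Complex.normSq_eq_norm_sq]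
    _ ≤ 1 := by nlinarith [norm_nonneg x]
  have h2 := norm_sq_line ha hb s
  rw [← hs] at h2
  have hba : (b - a) ≠ 0 := sub_ne_zero.2 (Ne.symm hab)
  have hns' : (0:ℝ) < Complex.normSq (b - a) := by
    rcases lt_or_eq_of_le (Complex.normSq_nonneg (b-a)) with h | h
    · exact h
    · exact absurd h.symm (by simpa using hba)
  have hs01 : s ∈ Set.Icc (0:ℝ) 1 := by
    constructor
    · by_contra hcon
      push_neg at hcon
      have hp : 0 < s * (s - 1) := mul_pos_of_neg_of_neg hcon (by linarith)
      nlinarith [mul_pos hp hns']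
    · by_contra hcon
      push_neg at hcon
      have hp : 0 < s * (s - 1) := mul_pos (by linarith) (by linarith)
      nlinarith [mul_pos hp hns']
  exact ⟨x, mem_segment_iff_param.2 ⟨s, hs01, hs⟩, hxseg⟩

/-- Conversely, if two chords with four distinct endpoints intersect, the endpoints of one
separate the endpoints of the other. -/
lemma sep_of_seg_inter {a b c d : ℂ} (ha : a ∈ S1) (hb : b ∈ S1) (hc : c ∈ S1) (hd : d ∈ S1)
    (hab : a ≠ b) (hcd : c ≠ d) (hac : a ≠ c) (had : a ≠ d) (hbc : b ≠ c) (hbd : b ≠ d)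
    (hint : (segment ℝ a b ∩ segment ℝ c d).Nonempty) :
    xf a b c * xf a b d < 0 := by
  obtain ⟨x, hxab, hxcd⟩ := hint
  have hfc : xf a b c ≠ 0 := by
    rw [Ne, xf_zero_iff ha hb hc hab]
    push_neg
    exact ⟨hac.symm, hbc.symm⟩
  have hfd : xf a b d ≠ 0 := by
    rw [Ne, xf_zero_iff ha hb hd hab]
    push_neg
    exact ⟨had.symm, hbd.symm⟩
  rcases lt_trichotomy (xf a b c * xf a b d) 0 with h | h | h
  · exact h
  · exact absurd (mul_eq_zero.1 h) (by push_neg; exact ⟨hfc, hfd⟩)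
  · exfalso
    -- both on same side: xf is nonzero with constant sign on segment [c,d], but x is on it
    have hx0 : xf a b x = 0 := xf_segment_zero hxab
    rcases mem_segment_iff_param.1 hxcd with ⟨t, ht, hxt⟩
    have hxt' : x = (1 - t) • c + t • d := by
      rw [hxt, Complex.real_smul, Complex.real_smul, Complex.real_smul]; push_cast; ring
    have haff : xf a b x = (1 - t) * xf a b c + t * xf a b d := by
      rw [hxt']; exact xf_affine a b c d t
    rcases mul_pos_iff.1 h with ⟨h₁, h₂⟩ | ⟨h₁, h₂⟩
    · have hmin : 0 < min (xf a b c) (xf a b d) := lt_min h₁ h₂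
      have hle : min (xf a b c) (xf a b d) ≤ (1 - t) * xf a b c + t * xf a b d := by
        nlinarith [min_le_left (xf a b c) (xf a b d), min_le_right (xf a b c) (xf a b d),
          ht.1, ht.2, mul_nonneg (by linarith [ht.2] : (0:ℝ) ≤ 1 - t)
            (by linarith [min_le_left (xf a b c) (xf a b d)] :
              0 ≤ xf a b c - min (xf a b c) (xf a b d)),
          mul_nonneg ht.1 (by linarith [min_le_right (xf a b c) (xf a b d)] :
              0 ≤ xf a b d - min (xf a b c) (xf a b d))]
      linarith [hx0, haff.symm.trans hx0]
    · have hmax : max (xf a b c) (xf a b d) < 0 := max_lt h₁ h₂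
      have hle : (1 - t) * xf a b c + t * xf a b d ≤ max (xf a b c) (xf a b d) := by
        nlinarith [le_max_left (xf a b c) (xf a b d), le_max_right (xf a b c) (xf a b d),
          ht.1, ht.2, mul_nonneg (by linarith [ht.2] : (0:ℝ) ≤ 1 - t)
            (by linarith [le_max_left (xf a b c) (xf a b d)] :
              0 ≤ max (xf a b c) (xf a b d) - xf a b c),
          mul_nonneg ht.1 (by linarith [le_max_right (xf a b c) (xf a b d)] :
              0 ≤ max (xf a b c) (xf a b d) - xf a b d)]
      linarith [hx0, haff.symm.trans hx0]

/-! ### Trigonometric formula for the cross functional on the circle -/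

lemma e_re (θ : ℝ) : (e θ).re = Real.cos θ := by
  rw [e, Complex.exp_ofReal_mul_I_re]

lemma e_im (θ : ℝ) : (e θ).im = Real.sin θ := by
  rw [e, Complex.exp_ofReal_mul_I_im]

lemma sin_add_formula (u v : ℝ) :
    Real.sin (2*v) + Real.sin (2*u) - Real.sin (2*(u+v))
      = 4 * Real.sin u * Real.sin (u+v) * Real.sin v := by
  rw [Real.sin_two_mul, Real.sin_two_mul, show (2:ℝ)*(u+v) = 2*u + 2*v by ring,
    Real.sin_add (2*u) (2*v), Real.sin_two_mul, Real.sin_two_mul, Real.cos_two_mul,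
    Real.cos_two_mul, Real.sin_add]
  linear_combination (-4 * Real.sin v * Real.cos v) * (Real.sin_sq_add_cos_sq u)
    + (-4 * Real.sin u * Real.cos u) * (Real.sin_sq_add_cos_sq v)

lemma xf_e (α β γ : ℝ) :
    xf (e α) (e β) (e γ)
      = Real.sin (γ - β) + Real.sin (β - α) + Real.sin (α - γ) := by
  simp only [xf, Complex.mul_im, Complex.sub_re, Complex.sub_im,
    Complex.conj_re, Complex.conj_im, map_sub, e_re, e_im]
  rw [Real.sin_sub, Real.sin_sub, Real.sin_sub]
  ring

lemma xf_e_factor (α β γ : ℝ) :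
    xf (e α) (e β) (e γ)
      = 4 * Real.sin ((β - α)/2) * Real.sin ((γ - α)/2) * Real.sin ((γ - β)/2) := by
  rw [xf_e]
  have h := sin_add_formula ((β - α)/2) ((γ - β)/2)
  rw [show (2:ℝ)*((γ-β)/2) = γ - β by ring, show (2:ℝ)*((β-α)/2) = β - α by ring,
    show (2:ℝ)*((β-α)/2 + (γ-β)/2) = γ - α by ring,
    show ((β-α)/2 + (γ-β)/2 : ℝ) = (γ-α)/2 by ring] at h
  rw [show (α - γ : ℝ) = -(γ - α) by ring, Real.sin_neg]
  linarith [h]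

lemma sin_half_pos {x : ℝ} (h0 : 0 < x) (h2 : x < 2*π) : 0 < Real.sin (x/2) :=
  Real.sin_pos_of_pos_of_lt_pi (by linarith) (by linarith)

/-- In the window `(α, α + 2π)`, the sign of `xf (e α) (e β) (e ·)` at `e γ` is the sign
of `γ - β`. -/
lemma xf_window_sign {α β γ : ℝ} (hβ : β ∈ Set.Ioo α (α + 2*π)) (hγ : γ ∈ Set.Ioo α (α + 2*π)) :
    ∃ c : ℝ, 0 < c ∧ xf (e α) (e β) (e γ) = c * Real.sin ((γ - β)/2) := by
  refine ⟨4 * Real.sin ((β - α)/2) * Real.sin ((γ - α)/2), ?_, xf_e_factor α β γ⟩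
  have h1 : 0 < Real.sin ((β - α)/2) := sin_half_pos (by linarith [hβ.1]) (by linarith [hβ.2])
  have h2 : 0 < Real.sin ((γ - α)/2) := sin_half_pos (by linarith [hγ.1]) (by linarith [hγ.2])
  positivity

lemma sin_half_sign_mul {x y : ℝ} (hx : |x| < 2*π) (hy : |y| < 2*π) :
    (Real.sin (x/2) * Real.sin (y/2) < 0 ↔ x * y < 0) := by
  rw [abs_lt] at hx hy
  rcases lt_trichotomy x 0 with h | h | h
  · have hsx : Real.sin (x/2) < 0 := by
      have := sin_half_pos (show 0 < -x by linarith) (by linarith)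
      rw [show (-x)/2 = -(x/2) by ring, Real.sin_neg] at this
      linarith
    rcases lt_trichotomy y 0 with h' | h' | h'
    · have hsy : Real.sin (y/2) < 0 := by
        have := sin_half_pos (show 0 < -y by linarith) (by linarith)
        rw [show (-y)/2 = -(y/2) by ring, Real.sin_neg] at this
        linarith
      constructor <;> intro hlt <;> nlinarith
    · simp [h']
    · have hsy : 0 < Real.sin (y/2) := sin_half_pos h' (by linarith)
      constructor <;> intro _ <;> nlinarith
  · simp [h]
  · have hsx : 0 < Real.sin (x/2) := sin_half_pos h (by linarith)
    rcases lt_trichotomy y 0 with h' | h' | h'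
    · have hsy : Real.sin (y/2) < 0 := by
        have := sin_half_pos (show 0 < -y by linarith) (by linarith)
        rw [show (-y)/2 = -(y/2) by ring, Real.sin_neg] at this
        linarith
      constructor <;> intro _ <;> nlinarith
    · simp [h']
    · have hsy : 0 < Real.sin (y/2) := sin_half_pos h' (by linarith)
      constructor <;> intro hlt <;> nlinarith

/-- The main combinatorial characterization of separation inside a window. -/
lemma sep_window {α β γ δ : ℝ} (hβ : β ∈ Set.Ioo α (α + 2*π)) (hγ : γ ∈ Set.Ioo α (α + 2*π))
    (hδ : δ ∈ Set.Ioo α (α + 2*π)) :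
    xf (e α) (e β) (e γ) * xf (e α) (e β) (e δ) < 0 ↔ (γ - β) * (δ - β) < 0 := by
  obtain ⟨c, hc, hfc⟩ := xf_window_sign hβ hγ
  obtain ⟨d, hd, hfd⟩ := xf_window_sign hβ hδ
  rw [hfc, hfd]
  have habs1 : |γ - β| < 2*π := by rw [abs_lt]; constructor <;> [linarith [hγ.1, hβ.2]; linarith [hγ.2, hβ.1]]
  have habs2 : |δ - β| < 2*π := by rw [abs_lt]; constructor <;> [linarith [hδ.1, hβ.2]; linarith [hδ.2, hβ.1]]
  rw [← sin_half_sign_mul habs1 habs2]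
  rw [show c * Real.sin ((γ-β)/2) * (d * Real.sin ((δ-β)/2))
      = (c*d) * (Real.sin ((γ-β)/2) * Real.sin ((δ-β)/2)) by ring]
  constructor
  · intro h
    by_contra h'
    push_neg at h'
    nlinarith [mul_pos hc hd]
  · intro h
    nlinarith [mul_pos hc hd]

/-! ### Chord API -/

lemma e_per (θ : ℝ) : e (θ + 2*π) = e θ := e_eq_iff.2 ⟨1, by ring⟩

lemma e_ne_of_window {θ₁ θ₂ : ℝ} (h : θ₁ ≠ θ₂) (h12 : |θ₁ - θ₂| < 2*π) : e θ₁ ≠ e θ₂ :=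
  fun hc => h (e_inj h12 hc)

lemma chordSegment_mk (a b : ℂ) : chordSegment s(a,b) = segment ℝ a b := by
  simp [chordSegment]

def mk2 (a b : ℂ) (ha : a ∈ S1) (hb : b ∈ S1) (hab : a ≠ b) : Chord :=
  ⟨s(a,b), fun z hz => by rcases Sym2.mem_iff.1 hz with h | h <;> rw [h] <;> assumption,
   by rw [Sym2.mk_isDiag_iff]; exact hab⟩

@[simp] lemma mk2_fst {a b : ℂ} (ha : a ∈ S1) (hb : b ∈ S1) (hab : a ≠ b) :
    (mk2 a b ha hb hab).1 = s(a,b) := rfl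

lemma chord_cases (C : Chord) :
    ∃ (a b : ℂ) (ha : a ∈ S1) (hb : b ∈ S1) (hab : a ≠ b), C = mk2 a b ha hb hab := by
  obtain ⟨p, hmem, hdiag⟩ := C
  induction p using Sym2.ind with
  | _ a b =>
    have ha : a ∈ S1 := hmem a (Sym2.mem_mk_left a b)
    have hb : b ∈ S1 := hmem b (Sym2.mem_mk_right a b)
    have hab : a ≠ b := by rwa [Sym2.mk_isDiag_iff] at hdiag
    exact ⟨a, b, ha, hb, hab, Subtype.ext rfl⟩

lemma chord_ext {C D : Chord} (h : C.1 = D.1) : C = D := Subtype.ext h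

lemma sym2_eq_of_mem {p : Sym2 ℂ} {a b : ℂ} (hab : a ≠ b) (ha : a ∈ p) (hb : b ∈ p) :
    p = s(a,b) := by
  induction p using Sym2.ind with
  | _ x y =>
    rcases Sym2.mem_iff.1 ha with h1 | h1 <;> rcases Sym2.mem_iff.1 hb with h2 | h2 <;>
      subst h1 <;> subst h2
    · exact absurd rfl hab
    · rfl
    · exact Sym2.eq_swap
    · exact absurd rfl hab

lemma mem_chordSegment_of_mem {p : Sym2 ℂ} {z : ℂ} (hz : z ∈ p) : z ∈ chordSegment p := by
  induction p using Sym2.ind with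
  | _ x y =>
    rw [chordSegment_mk]
    rcases Sym2.mem_iff.1 hz with h | h <;> rw [h]
    · exact left_mem_segment ℝ x y
    · exact right_mem_segment ℝ x y

lemma adj_of_touch {C D : Chord} (hne : C ≠ D) {z : ℂ} (hzC : z ∈ C.1) (hzD : z ∈ D.1) :
    CircleGraph.Adj C D :=
  ⟨hne, ⟨z, mem_chordSegment_of_mem hzC, mem_chordSegment_of_mem hzD⟩⟩

lemma mk2_ne_of_distinct {a b c d : ℂ} {ha hb hab hc hd hcd}
    (h1 : a ≠ c) (h2 : a ≠ d) (h3 : b ≠ c) (h4 : b ≠ d) :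
    mk2 a b ha hb hab ≠ mk2 c d hc hd hcd := by
  intro h
  have := congrArg (·.1) h
  simp only [mk2_fst] at this
  rcases Sym2.eq_iff.1 this with ⟨h', _⟩ | ⟨h', _⟩
  · exact h1 h'
  · exact h2 h'

/-- Adjacency for chords with four distinct endpoints. -/
lemma adj_iff_sep {a b c d : ℂ} {ha : a ∈ S1} {hb : b ∈ S1} {hc : c ∈ S1} {hd : d ∈ S1}
    {hab : a ≠ b} {hcd : c ≠ d}
    (h1 : a ≠ c) (h2 : a ≠ d) (h3 : b ≠ c) (h4 : b ≠ d) :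
    CircleGraph.Adj (mk2 a b ha hb hab) (mk2 c d hc hd hcd) ↔ xf a b c * xf a b d < 0 := by
  constructor
  · rintro ⟨-, hint⟩
    rw [mk2_fst, mk2_fst, chordSegment_mk, chordSegment_mk] at hint
    exact sep_of_seg_inter ha hb hc hd hab hcd h1 h2 h3 h4 hint
  · intro hsep
    refine ⟨mk2_ne_of_distinct h1 h2 h3 h4, ?_⟩
    rw [mk2_fst, mk2_fst, chordSegment_mk, chordSegment_mk]
    exact seg_inter_of_sep ha hb hc hd hab hsep

/-! ### Window coordinates for adjacency -/

/-- Put an angle in the window based at `ξ`. -/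
def wnorm (ξ η : ℝ) : ℝ := if ξ < η then η else η + 2*π

lemma wnorm_mem {α ξ η : ℝ} (hξ : ξ ∈ Set.Ioo α (α + 2*π)) (hη : η ∈ Set.Ioo α (α + 2*π))
    (hne : η ≠ ξ) : wnorm ξ η ∈ Set.Ioo ξ (ξ + 2*π) := by
  rw [wnorm]
  split_ifs with h
  · exact ⟨h, by linarith [hη.2, hξ.1]⟩
  · push_neg at h
    rcases lt_or_eq_of_le h with h' | h'
    · exact ⟨by linarith [hη.1, hξ.2], by linarith⟩
    · exact absurd h' hne

lemma e_wnorm (ξ η : ℝ) : e (wnorm ξ η) = e η := by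
  rw [wnorm]; split_ifs with h
  · rfl
  · exact e_per η

lemma wnorm_lt_iff {α ξ ξ' η : ℝ} (hξ : ξ ∈ Set.Ioo α (α + 2*π)) (hξ' : ξ' ∈ Set.Ioo α (α + 2*π))
    (hη : η ∈ Set.Ioo α (α + 2*π)) (hlt : ξ < ξ') :
    wnorm ξ η < ξ' ↔ η ∈ Set.Ioo ξ ξ' := by
  rw [wnorm]
  split_ifs with h
  · constructor
    · intro h'; exact ⟨h, h'⟩
    · intro h'; exact h'.2
  · push_neg at h
    constructor
    · intro h'; exfalso; linarith [hξ'.2, hη.1]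
    · intro h'; exfalso; linarith [h'.1]

/-- Adjacency when one chord has an endpoint at the base of the window. -/
lemma adj_base_iff {α β ξ η : ℝ} (hβ : β ∈ Set.Ioo α (α + 2*π)) (hξ : ξ ∈ Set.Ioo α (α + 2*π))
    (hη : η ∈ Set.Ioo α (α + 2*π)) (hβξ : β ≠ ξ) (hβη : β ≠ η) (hξη : ξ ≠ η)
    {h1 h2 h3 h4 h5 h6} :
    CircleGraph.Adj (mk2 (e α) (e β) h1 h2 h3) (mk2 (e ξ) (e η) h4 h5 h6) ↔
      (ξ - β) * (η - β) < 0 := by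
  have hne : ∀ {u v : ℝ}, u ∈ Set.Ioo α (α+2*π) → v ∈ Set.Ioo α (α+2*π) → u ≠ v → e u ≠ e v := by
    intro u v hu hv huv
    exact e_ne_of_window huv (by rw [abs_lt]; constructor <;> [linarith [hu.1, hv.2]; linarith [hu.2, hv.1]])
  have hea : ∀ {u : ℝ}, u ∈ Set.Ioo α (α+2*π) → e α ≠ e u := by
    intro u hu
    apply e_ne_of_window (by linarith [hu.1] : α ≠ u)
    rw [abs_lt]; constructor <;> linarith [hu.1, hu.2]
  rw [adj_iff_sep (hea hξ) (hea hη) (hne hβ hξ hβξ) (hne hβ hη hβη)]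
  exact sep_window hβ hξ hη

/-- Adjacency for two chords inside the window `(α, α + 2π)`. -/
lemma adj_in_iff {α ξ₁ ξ₂ η₁ η₂ : ℝ} (hξ₁ : ξ₁ ∈ Set.Ioo α (α + 2*π))
    (hξ₂ : ξ₂ ∈ Set.Ioo α (α + 2*π)) (hη₁ : η₁ ∈ Set.Ioo α (α + 2*π))
    (hη₂ : η₂ ∈ Set.Ioo α (α + 2*π)) (hord : ξ₁ < ξ₂)
    (d11 : η₁ ≠ ξ₁) (d12 : η₁ ≠ ξ₂) (d21 : η₂ ≠ ξ₁) (d22 : η₂ ≠ ξ₂) (d : η₁ ≠ η₂)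
    {h1 h2 h3 h4 h5 h6} :
    CircleGraph.Adj (mk2 (e ξ₁) (e ξ₂) h1 h2 h3) (mk2 (e η₁) (e η₂) h4 h5 h6) ↔
      ((η₁ ∈ Set.Ioo ξ₁ ξ₂ ∧ η₂ ∉ Set.Ioo ξ₁ ξ₂) ∨ (η₁ ∉ Set.Ioo ξ₁ ξ₂ ∧ η₂ ∈ Set.Ioo ξ₁ ξ₂)) := by
  have hne : ∀ {u v : ℝ}, u ∈ Set.Ioo α (α+2*π) → v ∈ Set.Ioo α (α+2*π) → u ≠ v → e u ≠ e v := by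
    intro u v hu hv huv
    exact e_ne_of_window huv (by rw [abs_lt]; constructor <;> [linarith [hu.1, hv.2]; linarith [hu.2, hv.1]])
  have hβ : ξ₂ ∈ Set.Ioo ξ₁ (ξ₁ + 2*π) := ⟨hord, by linarith [hξ₂.2, hξ₁.1]⟩
  have hw1 : wnorm ξ₁ η₁ ∈ Set.Ioo ξ₁ (ξ₁ + 2*π) := wnorm_mem hξ₁ hη₁ d11
  have hw2 : wnorm ξ₁ η₂ ∈ Set.Ioo ξ₁ (ξ₁ + 2*π) := wnorm_mem hξ₁ hη₂ d21
  have key : CircleGraph.Adj (mk2 (e ξ₁) (e ξ₂) h1 h2 h3)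
      (mk2 (e (wnorm ξ₁ η₁)) (e (wnorm ξ₁ η₂))
        (e_mem _) (e_mem _) (by rw [e_wnorm, e_wnorm]; exact hne hη₁ hη₂ d)) ↔
      (wnorm ξ₁ η₁ - ξ₂) * (wnorm ξ₁ η₂ - ξ₂) < 0 := by
    apply adj_base_iff hβ hw1 hw2
    · intro hc; rw [wnorm] at hc; split_ifs at hc with h
      · exact d12 hc.symm
      · linarith [hη₁.1, hξ₂.2]
    · intro hc; rw [wnorm] at hc; split_ifs at hc with h
      · exact d22 hc.symm
      · linarith [hη₂.1, hξ₂.2]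
    · intro hc
      have := congrArg e hc
      rw [e_wnorm, e_wnorm] at this
      exact (hne hη₁ hη₂ d) this
  have hrw : mk2 (e (wnorm ξ₁ η₁)) (e (wnorm ξ₁ η₂)) (e_mem _) (e_mem _)
      (by rw [e_wnorm, e_wnorm]; exact hne hη₁ hη₂ d) = mk2 (e η₁) (e η₂) h4 h5 h6 := by
    apply chord_ext
    rw [mk2_fst, mk2_fst, e_wnorm, e_wnorm]
  rw [hrw] at key
  rw [key]
  rw [mul_neg_iff]
  have l1 := wnorm_lt_iff hξ₁ hξ₂ hη₁ hord
  have l2 := wnorm_lt_iff hξ₁ hξ₂ hη₂ hord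
  have g1 : wnorm ξ₁ η₁ ≠ ξ₂ := by
    intro hc
    exact (hne hη₁ hξ₂ d12) (by rw [← e_wnorm ξ₁ η₁, hc])
  have g2 : wnorm ξ₁ η₂ ≠ ξ₂ := by
    intro hc
    exact (hne hη₂ hξ₂ d22) (by rw [← e_wnorm ξ₁ η₂, hc])
  constructor
  · rintro (⟨u, v⟩ | ⟨u, v⟩)
    · right
      constructor
      · intro hc; rw [← l1] at hc; linarith
      · rw [← l2]; linarith
    · left
      constructor
      · rw [← l1]; linarith
      · intro hc; rw [← l2] at hc; linarith
  · rintro (⟨u, v⟩ | ⟨u, v⟩)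
    · right
      refine ⟨?_, ?_⟩
      · have := l1.2 u; linarith
      · rcases lt_or_gt_of_ne g2 with h | h
        · exact absurd (l2.1 h) v
        · linarith
    · left
      refine ⟨?_, ?_⟩
      · rcases lt_or_gt_of_ne g1 with h | h
        · exact absurd (l1.1 h) u
        · linarith
      · have := l2.2 v; linarith

lemma e_ne_window {α u v : ℝ} (hu : u ∈ Set.Ioo α (α + 2*π)) (hv : v ∈ Set.Ioo α (α + 2*π))
    (huv : u ≠ v) : e u ≠ e v :=
  e_ne_of_window huv (by rw [abs_lt]; constructor <;> [linarith [hu.1, hv.2]; linarith [hu.2, hv.1]])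

lemma e_base_ne {α u : ℝ} (hu : u ∈ Set.Ioo α (α + 2*π)) : e α ≠ e u :=
  e_ne_of_window (by linarith [hu.1] : α ≠ u)
    (by rw [abs_lt]; constructor <;> linarith [hu.1, hu.2])

/-! ### Common non-neighbours and the four-components invariant -/

def Avoid (s : Set Chord) (E : Chord) : Prop :=
  ∀ C ∈ s, ¬ CircleGraph.Adj E C ∧ E ≠ C

def Hs (s : Set Chord) : SimpleGraph Chord where
  Adj E F := CircleGraph.Adj E F ∧ Avoid s E ∧ Avoid s F
  symm := ⟨fun E F ⟨h, hE, hF⟩ => ⟨h.symm, hF, hE⟩⟩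
  loopless := ⟨fun E h => CircleGraph.loopless.irrefl E h.1⟩

/-- There exist four pairwise unreachable common strict non-neighbours of `s`. -/
def Quads (s : Set Chord) : Prop :=
  ∃ E : Fin 4 → Chord, (∀ i, Avoid s (E i)) ∧
    ∀ i j, i ≠ j → ¬ (Hs s).Reachable (E i) (E j)

lemma avoid_image (φ : CircleGraph ≃g CircleGraph) (s : Set Chord) (E : Chord) :
    Avoid ((fun C => φ C) '' s) (φ E) ↔ Avoid s E := by
  constructor
  · intro h C hC
    obtain ⟨h1, h2⟩ := h (φ C) ⟨C, hC, rfl⟩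
    refine ⟨fun hc => h1 (φ.map_adj_iff.2 hc), fun hc => h2 (by rw [hc])⟩
  · rintro h C ⟨C₀, hC₀, rfl⟩
    obtain ⟨h1, h2⟩ := h C₀ hC₀
    exact ⟨fun hc => h1 (φ.map_adj_iff.1 hc), fun hc => h2 (φ.toEquiv.injective hc)⟩

def hs_hom (φ : CircleGraph ≃g CircleGraph) (s : Set Chord) :
    Hs s →g Hs ((fun C => φ C) '' s) where
  toFun := fun E => φ E
  map_rel' := by
    rintro E F ⟨h1, h2, h3⟩
    exact ⟨φ.map_adj_iff.2 h1, (avoid_image φ s E).2 h2, (avoid_image φ s F).2 h3⟩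

lemma quads_image (φ : CircleGraph ≃g CircleGraph) (s : Set Chord) :
    Quads ((fun C => φ C) '' s) ↔ Quads s := by
  have himg : ∀ (ψ : CircleGraph ≃g CircleGraph) (t : Set Chord),
      Quads t → Quads ((fun C => ψ C) '' t) := by
    rintro ψ t ⟨E, hAv, hUn⟩
    refine ⟨fun i => ψ (E i), fun i => (avoid_image ψ t (E i)).2 (hAv i), ?_⟩
    intro i j hij hr
    apply hUn i j hij
    have h2 := hr.map (hs_hom ψ.symm ((fun C => ψ C) '' t))
    have heq : ((fun C => ψ.symm C) '' ((fun C => ψ C) '' t)) = t := by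
      ext x
      simp only [Set.mem_image]
      constructor
      · rintro ⟨y, ⟨z, hz, rfl⟩, rfl⟩
        simpa using hz
      · intro hx
        exact ⟨ψ x, ⟨x, hx, rfl⟩, by simp⟩
    have e1 : (hs_hom ψ.symm ((fun C => ψ C) '' t)) (ψ (E i)) = E i := by
      show ψ.symm (ψ (E i)) = E i
      simp
    have e2 : (hs_hom ψ.symm ((fun C => ψ C) '' t)) (ψ (E j)) = E j := by
      show ψ.symm (ψ (E j)) = E j
      simp
    simp only at h2
    rw [e1, e2] at h2
    rwa [show Hs ((fun C => ψ.symm C) '' ((fun C => ψ C) '' t)) = Hs t from congrArg Hs heq]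
      at h2
  constructor
  · intro h
    have := himg φ.symm _ h
    have heq : ((fun C => φ.symm C) '' ((fun C => φ C) '' s)) = s := by
      ext x
      simp only [Set.mem_image]
      constructor
      · rintro ⟨y, ⟨z, hz, rfl⟩, rfl⟩
        simpa using hz
      · intro hx
        exact ⟨φ x, ⟨x, hx, rfl⟩, by simp⟩
    rwa [heq] at this
  · exact himg φ s

lemma reachable_invariant {V : Type*} {G : SimpleGraph V} {P : V → Prop}
    (hP : ∀ a b, G.Adj a b → P a → P b) {x y : V} (h : G.Reachable x y) : P x → P y := by
  obtain ⟨w⟩ := h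
  induction w with
  | nil => exact id
  | cons hadj _ ih => exact fun hx => ih (hP _ _ hadj hx)

/-! ### Chords inside an interval of the window -/

/-- `E` is a chord whose two endpoints have angles in the open interval `(l, r)`. -/
def InI (l r : ℝ) (E : Chord) : Prop :=
  ∃ (ξ η : ℝ) (h : e ξ ≠ e η), ξ ∈ Set.Ioo l r ∧ η ∈ Set.Ioo l r ∧ ξ < η ∧
    E = mk2 (e ξ) (e η) (e_mem ξ) (e_mem η) h

lemma inI_disjoint {α l₁ r₁ l₂ r₂ : ℝ} (hw1 : Set.Ioo l₁ r₁ ⊆ Set.Ioo α (α + 2*π))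
    (hw2 : Set.Ioo l₂ r₂ ⊆ Set.Ioo α (α + 2*π)) (hsep : r₁ ≤ l₂) {E : Chord}
    (h1 : InI l₁ r₁ E) (h2 : InI l₂ r₂ E) : False := by
  obtain ⟨ξ₁, ξ₂, hne, hm1, hm2, hlt, rfl⟩ := h1
  obtain ⟨η₁, η₂, hne', hm1', hm2', hlt', hEq⟩ := h2
  have := congrArg (·.1) hEq
  simp only [mk2_fst] at this
  rcases Sym2.eq_iff.1 this with ⟨ha, _⟩ | ⟨ha, _⟩
  · have : ξ₁ = η₁ := e_inj (by
      have u1 := hw1 hm1; have u2 := hw2 hm1'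
      rw [abs_lt]; constructor <;> [linarith [u1.1, u2.2]; linarith [u1.2, u2.1]]) ha
    linarith [hm1.2, hm1'.1]
  · have : ξ₁ = η₂ := e_inj (by
      have u1 := hw1 hm1; have u2 := hw2 hm2'
      rw [abs_lt]; constructor <;> [linarith [u1.1, u2.2]; linarith [u1.2, u2.1]]) ha
    linarith [hm1.2, hm2'.1]

/-- Chords in order-separated intervals of the window are disjoint. -/
lemma not_adj_of_sep_intervals {α l₁ r₁ l₂ r₂ : ℝ}
    (hw1 : Set.Ioo l₁ r₁ ⊆ Set.Ioo α (α + 2*π)) (hw2 : Set.Ioo l₂ r₂ ⊆ Set.Ioo α (α + 2*π))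
    (hsep : r₁ ≤ l₂) {E F : Chord} (hE : InI l₁ r₁ E) (hF : InI l₂ r₂ F) :
    ¬ CircleGraph.Adj E F := by
  obtain ⟨ξ₁, ξ₂, hne, hm1, hm2, hlt, rfl⟩ := hE
  obtain ⟨η₁, η₂, hne', hm1', hm2', hlt', rfl⟩ := hF
  have k1 : ξ₁ < η₁ := by linarith [hm1.2, hm1'.1]
  have k2 : ξ₂ < η₁ := by linarith [hm2.2, hm1'.1]
  have k3 : ξ₂ < η₂ := by linarith [hm2.2, hm2'.1]
  have k4 : ξ₁ < η₂ := by linarith [hm1.2, hm2'.1]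
  rw [adj_in_iff (hw1 hm1) (hw1 hm2) (hw2 hm1') (hw2 hm2') hlt
    (by linarith) (by linarith) (by linarith) (by linarith) (by linarith)]
  rintro (⟨u, _⟩ | ⟨_, v⟩)
  · exact absurd u.2 (by linarith)
  · exact absurd v.2 (by linarith)

lemma exists_inI {α l r : ℝ} (hlr : l < r) (hw : Set.Ioo l r ⊆ Set.Ioo α (α + 2*π)) :
    ∃ E, InI l r E := by
  have h1 : (2*l+r)/3 ∈ Set.Ioo l r := by constructor <;> nlinarith
  have h2 : (l+2*r)/3 ∈ Set.Ioo l r := by constructor <;> nlinarith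
  have hlt : (2*l+r)/3 < (l+2*r)/3 := by nlinarith
  exact ⟨_, (2*l+r)/3, (l+2*r)/3, e_ne_window (hw h1) (hw h2) (ne_of_lt hlt), h1, h2, hlt, rfl⟩

/-- Any two chords inside a single interval are reachable in the common-non-neighbour graph,
provided every chord inside the interval is a common strict non-neighbour. -/
lemma reachable_same_interval {α l r : ℝ} (hw : Set.Ioo l r ⊆ Set.Ioo α (α + 2*π))
    {s : Set Chord} (Hcl : ∀ G, InI l r G → Avoid s G) {E F : Chord}
    (hE : InI l r E) (hF : InI l r F) : (Hs s).Reachable E F := by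
  obtain ⟨ξ₁, ξ₂, hne, hm1, hm2, hlt, rfl⟩ := hE
  obtain ⟨η₁, η₂, hne', hm1', hm2', hlt', rfl⟩ := hF
  set τ := (l + min ξ₁ η₁)/2 with hτ
  have hτl : l < τ := by
    rw [hτ]
    rcases min_cases ξ₁ η₁ with ⟨h, _⟩ | ⟨h, _⟩ <;> rw [h] <;> [linarith [hm1.1]; linarith [hm1'.1]]
  have hτξ : τ < ξ₁ := by
    rw [hτ]
    rcases min_cases ξ₁ η₁ with ⟨h, h'⟩ | ⟨h, h'⟩ <;> rw [h] <;> [linarith [hm1.1]; linarith [hm1'.1]]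
  have hτη : τ < η₁ := by
    rw [hτ]
    rcases min_cases ξ₁ η₁ with ⟨h, h'⟩ | ⟨h, h'⟩ <;> rw [h] <;> [linarith [hm1.1, h']; linarith [hm1'.1]]
  have hτr : τ < r := lt_trans hτξ hm1.2
  have hτmem : τ ∈ Set.Ioo l r := ⟨hτl, hτr⟩
  set σE := (ξ₁ + ξ₂)/2 with hσE
  set σF := (η₁ + η₂)/2 with hσF
  have hσEmem : σE ∈ Set.Ioo ξ₁ ξ₂ := by constructor <;> [linarith [hlt]; linarith [hlt]]
  have hσFmem : σF ∈ Set.Ioo η₁ η₂ := by constructor <;> [linarith [hlt']; linarith [hlt']]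
  have hσEI : σE ∈ Set.Ioo l r := ⟨lt_trans hm1.1 hσEmem.1, lt_trans hσEmem.2 hm2.2⟩
  have hσFI : σF ∈ Set.Ioo l r := ⟨lt_trans hm1'.1 hσFmem.1, lt_trans hσFmem.2 hm2'.2⟩
  have hτσE : τ < σE := lt_trans hτξ hσEmem.1
  have hτσF : τ < σF := lt_trans hτη hσFmem.1
  set GE : Chord := mk2 (e τ) (e σE) (e_mem τ) (e_mem σE)
    (e_ne_window (hw hτmem) (hw hσEI) (ne_of_lt hτσE)) with hGE
  set GF : Chord := mk2 (e τ) (e σF) (e_mem τ) (e_mem σF)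
    (e_ne_window (hw hτmem) (hw hσFI) (ne_of_lt hτσF)) with hGF
  have hGEI : InI l r GE := ⟨τ, σE, _, hτmem, hσEI, hτσE, rfl⟩
  have hGFI : InI l r GF := ⟨τ, σF, _, hτmem, hσFI, hτσF, rfl⟩
  have hEI : InI l r (mk2 (e ξ₁) (e ξ₂) (e_mem ξ₁) (e_mem ξ₂) hne) :=
    ⟨ξ₁, ξ₂, hne, hm1, hm2, hlt, rfl⟩
  have hFI : InI l r (mk2 (e η₁) (e η₂) (e_mem η₁) (e_mem η₂) hne') :=
    ⟨η₁, η₂, hne', hm1', hm2', hlt', rfl⟩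
  -- E ~ GE
  have adjEGE : CircleGraph.Adj (mk2 (e ξ₁) (e ξ₂) (e_mem ξ₁) (e_mem ξ₂) hne) GE := by
    rw [hGE, adj_in_iff (hw hm1) (hw hm2) (hw hτmem) (hw hσEI) hlt
      (by linarith) (by linarith) (ne_of_gt hσEmem.1) (ne_of_lt hσEmem.2) (ne_of_lt hτσE)]
    right
    exact ⟨fun hc => absurd hc.1 (by linarith), hσEmem⟩
  have adjFGF : CircleGraph.Adj (mk2 (e η₁) (e η₂) (e_mem η₁) (e_mem η₂) hne') GF := by
    rw [hGF, adj_in_iff (hw hm1') (hw hm2') (hw hτmem) (hw hσFI) hlt'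
      (by linarith) (by linarith) (ne_of_gt hσFmem.1) (ne_of_lt hσFmem.2) (ne_of_lt hτσF)]
    right
    exact ⟨fun hc => absurd hc.1 (by linarith), hσFmem⟩
  have step1 : (Hs s).Adj (mk2 (e ξ₁) (e ξ₂) (e_mem ξ₁) (e_mem ξ₂) hne) GE :=
    ⟨adjEGE, Hcl _ hEI, Hcl _ hGEI⟩
  have step3 : (Hs s).Adj GF (mk2 (e η₁) (e η₂) (e_mem η₁) (e_mem η₂) hne') :=
    ⟨adjFGF.symm, Hcl _ hGFI, Hcl _ hFI⟩
  have mid : (Hs s).Reachable GE GF := by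
    by_cases hσ : σE = σF
    · have hEq : GE = GF := by
        apply chord_ext
        rw [hGE, hGF, mk2_fst, mk2_fst, hσ]
      rw [hEq]
    · refine SimpleGraph.Adj.reachable ⟨?_, Hcl _ hGEI, Hcl _ hGFI⟩
      apply adj_of_touch
      · rw [hGE, hGF]
        intro hc
        have := congrArg (·.1) hc
        simp only [mk2_fst] at this
        rcases Sym2.eq_iff.1 this with ⟨_, h2⟩ | ⟨h1, _⟩
        · exact (e_ne_window (hw hσEI) (hw hσFI) hσ) h2
        · exact (e_ne_window (hw hτmem) (hw hσFI) (ne_of_lt hτσF)) h1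
      · rw [hGE]; exact Sym2.mem_mk_left _ _
      · rw [hGF]; exact Sym2.mem_mk_left _ _
  exact (step1.reachable.trans mid).trans step3.reachable

lemma not_endpoint_of_avoid {s : Set Chord} {E C : Chord} (h : Avoid s E) (hC : C ∈ s) {z : ℂ}
    (hz : z ∈ C.1) : z ∉ E.1 :=
  fun hzE => (h C hC).1 (adj_of_touch (h C hC).2 hzE hz)

lemma reps_sorted {α : ℝ} {E : Chord} (hα : e α ∉ E.1) :
    ∃ (ξ η : ℝ) (h : e ξ ≠ e η), ξ ∈ Set.Ioo α (α + 2*π) ∧ η ∈ Set.Ioo α (α + 2*π) ∧ ξ < η ∧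
      E = mk2 (e ξ) (e η) (e_mem ξ) (e_mem η) h := by
  obtain ⟨a, b, ha, hb, hab, rfl⟩ := chord_cases E
  have haα : a ≠ e α := fun h => hα (h ▸ Sym2.mem_mk_left a b)
  have hbα : b ≠ e α := fun h => hα (h ▸ Sym2.mem_mk_right a b)
  obtain ⟨ξ, hξ, hξa⟩ := exists_rep' ha haα
  obtain ⟨η, hη, hηb⟩ := exists_rep' hb hbα
  have hξη : ξ ≠ η := by
    intro hc
    exact hab (by rw [← hξa, ← hηb, hc])
  rcases lt_or_gt_of_ne hξη with h | h
  · refine ⟨ξ, η, by rw [hξa, hηb]; exact hab, hξ, hη, h, ?_⟩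
    apply chord_ext
    rw [mk2_fst, mk2_fst, hξa, hηb]
  · refine ⟨η, ξ, by rw [hξa, hηb]; exact fun hc => hab hc.symm, hη, hξ, h, ?_⟩
    apply chord_ext
    rw [mk2_fst, mk2_fst, hξa, hηb]
    exact Sym2.eq_swap.symm

/-- Generic negative driver: if common non-neighbours fall into three classes, each of
which is internally reachable, then `Quads` fails. -/
lemma not_quads_of_arcs {s : Set Chord} {P : Fin 3 → Chord → Prop}
    (hreach : ∀ k E F, P k E → P k F → (Hs s).Reachable E F)
    (hclass : ∀ E, Avoid s E → ∃ k, P k E) : ¬ Quads s := by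
  rintro ⟨E, hAv, hUn⟩
  choose f hf using fun i => hclass (E i) (hAv i)
  obtain ⟨i, j, hij, hfij⟩ := Fintype.exists_ne_map_eq_of_card_lt f (by norm_num)
  exact hUn i j hij (hreach (f i) (E i) (E j) (hf i) (hfij ▸ hf j))

/-- Generic positive driver: four order-separated arcs of common non-neighbours give
four pairwise unreachable vertices. -/
lemma quads_of_arcs {α : ℝ} {s : Set Chord} {A : Fin 4 → ℝ × ℝ}
    (hsort : ∀ i j, i < j → (A i).2 ≤ (A j).1)
    (hlt : ∀ i, (A i).1 < (A i).2)
    (hw : ∀ i, Set.Ioo (A i).1 (A i).2 ⊆ Set.Ioo α (α + 2*π))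
    (Hcl : ∀ i G, InI (A i).1 (A i).2 G → Avoid s G)
    (Hclass : ∀ E, Avoid s E → ∃ i, InI (A i).1 (A i).2 E) : Quads s := by
  choose E hE using fun i => exists_inI (hlt i) (hw i)
  refine ⟨E, fun i => Hcl i _ (hE i), ?_⟩
  intro i j hij hr
  have hP : ∀ a b, (Hs s).Adj a b → InI (A i).1 (A i).2 a → InI (A i).1 (A i).2 b := by
    rintro a b ⟨hadj, _, hAvb⟩ hPa
    obtain ⟨k, hk⟩ := Hclass b hAvb
    rcases lt_trichotomy i k with h | h | h
    · exact absurd hadj (not_adj_of_sep_intervals (hw i) (hw k) (hsort i k h) hPa hk)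
    · rwa [← h] at hk
    · exact absurd hadj.symm (not_adj_of_sep_intervals (hw k) (hw i) (hsort k i h) hk hPa)
  have hPj : InI (A i).1 (A i).2 (E j) := reachable_invariant hP hr (hE i)
  rcases lt_or_gt_of_ne hij with h | h
  · exact inI_disjoint (hw i) (hw j) (hsort i j h) hPj (hE j)
  · exact inI_disjoint (hw j) (hw i) (hsort j i h) (hE j) hPj

/-! ### Avoidance of base and inner chords by interval chords -/

lemma avoid_base {α β l r : ℝ} (hβ : β ∈ Set.Ioo α (α + 2*π))
    (hcont : Set.Ioo l r ⊆ Set.Ioo α (α + 2*π)) (hside : r ≤ β ∨ β ≤ l)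
    {G : Chord} (hG : InI l r G) {h1 h2 h3} :
    ¬ CircleGraph.Adj G (mk2 (e α) (e β) h1 h2 h3) ∧ G ≠ mk2 (e α) (e β) h1 h2 h3 := by
  obtain ⟨ζ₁, ζ₂, hne, hm1, hm2, hlt, rfl⟩ := hG
  have hζ₁ := hcont hm1
  have hζ₂ := hcont hm2
  have hζ₁β : ζ₁ ≠ β := by rcases hside with h | h <;> [exact ne_of_lt (by linarith [hm1.2]); exact ne_of_gt (by linarith [hm1.1])]
  have hζ₂β : ζ₂ ≠ β := by rcases hside with h | h <;> [exact ne_of_lt (by linarith [hm2.2]); exact ne_of_gt (by linarith [hm2.1])]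
  constructor
  · rw [SimpleGraph.adj_comm, adj_base_iff hβ hζ₁ hζ₂ (Ne.symm hζ₁β) (Ne.symm hζ₂β)
      (ne_of_lt hlt)]
    rcases hside with h | h
    · intro hc; nlinarith [hm1.2, hm2.2]
    · intro hc; nlinarith [hm1.1, hm2.1]
  · exact mk2_ne_of_distinct (Ne.symm (e_base_ne hζ₁)) (e_ne_window hζ₁ hβ hζ₁β)
      (Ne.symm (e_base_ne hζ₂)) (e_ne_window hζ₂ hβ hζ₂β)

lemma avoid_in {α γ₁ γ₂ l r : ℝ} (hγ₁ : γ₁ ∈ Set.Ioo α (α + 2*π))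
    (hγ₂ : γ₂ ∈ Set.Ioo α (α + 2*π)) (hord : γ₁ < γ₂)
    (hcont : Set.Ioo l r ⊆ Set.Ioo α (α + 2*π))
    (hside : r ≤ γ₁ ∨ γ₂ ≤ l ∨ (γ₁ ≤ l ∧ r ≤ γ₂))
    {G : Chord} (hG : InI l r G) {h1 h2 h3} :
    ¬ CircleGraph.Adj G (mk2 (e γ₁) (e γ₂) h1 h2 h3) ∧ G ≠ mk2 (e γ₁) (e γ₂) h1 h2 h3 := by
  obtain ⟨ζ₁, ζ₂, hne, hm1, hm2, hlt, rfl⟩ := hG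
  have hζ₁ := hcont hm1
  have hζ₂ := hcont hm2
  have d1 : ζ₁ ≠ γ₁ := by
    rcases hside with h | h | ⟨h, h'⟩
    · exact ne_of_lt (by linarith [hm1.2])
    · exact ne_of_gt (by linarith [hm1.1, hord])
    · exact ne_of_gt (by linarith [hm1.1])
  have d2 : ζ₁ ≠ γ₂ := by
    rcases hside with h | h | ⟨h, h'⟩
    · exact ne_of_lt (by linarith [hm1.2, hord])
    · exact ne_of_gt (by linarith [hm1.1])
    · exact ne_of_lt (by linarith [hm1.2])
  have d3 : ζ₂ ≠ γ₁ := by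
    rcases hside with h | h | ⟨h, h'⟩
    · exact ne_of_lt (by linarith [hm2.2])
    · exact ne_of_gt (by linarith [hm2.1, hord])
    · exact ne_of_gt (by linarith [hm2.1])
  have d4 : ζ₂ ≠ γ₂ := by
    rcases hside with h | h | ⟨h, h'⟩
    · exact ne_of_lt (by linarith [hm2.2, hord])
    · exact ne_of_gt (by linarith [hm2.1])
    · exact ne_of_lt (by linarith [hm2.2])
  constructor
  · rw [SimpleGraph.adj_comm, adj_in_iff hγ₁ hγ₂ (hcont hm1) (hcont hm2) hord
      d1 d2 d3 d4 (ne_of_lt hlt)]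
    rintro (⟨u, v⟩ | ⟨u, v⟩)
    · rcases hside with h | h | ⟨h, h'⟩
      · exact absurd u.1 (by linarith [hm1.2])
      · exact absurd u.2 (by linarith [hm1.1])
      · exact v ⟨by linarith [hm2.1], by linarith [hm2.2]⟩
    · rcases hside with h | h | ⟨h, h'⟩
      · exact absurd v.1 (by linarith [hm2.2])
      · exact absurd v.2 (by linarith [hm2.1])
      · exact u ⟨by linarith [hm1.1], by linarith [hm1.2]⟩
  · exact mk2_ne_of_distinct (e_ne_window hζ₁ hγ₁ d1) (e_ne_window hζ₁ hγ₂ d2)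
      (e_ne_window hζ₂ hγ₁ d3) (e_ne_window hζ₂ hγ₂ d4)

lemma side_of_not_adj_base {α β ξ η : ℝ} (hβ : β ∈ Set.Ioo α (α + 2*π))
    (hξ : ξ ∈ Set.Ioo α (α + 2*π)) (hη : η ∈ Set.Ioo α (α + 2*π))
    (hξβ : ξ ≠ β) (hηβ : η ≠ β) (hord : ξ < η) {h1 h2 h3 h4 h5 h6}
    (hna : ¬ CircleGraph.Adj (mk2 (e ξ) (e η) h4 h5 h6) (mk2 (e α) (e β) h1 h2 h3)) :
    β < ξ ∨ η < β := by
  rw [SimpleGraph.adj_comm, adj_base_iff hβ hξ hη (Ne.symm hξβ) (Ne.symm hηβ)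
    (ne_of_lt hord)] at hna
  push_neg at hna
  rcases lt_or_gt_of_ne hξβ with h | h
  · right
    rcases lt_or_gt_of_ne hηβ with h' | h'
    · exact h'
    · exfalso; nlinarith
  · left; exact h

lemma side_of_not_adj_in {α γ₁ γ₂ ξ η : ℝ} (hγ₁ : γ₁ ∈ Set.Ioo α (α + 2*π))
    (hγ₂ : γ₂ ∈ Set.Ioo α (α + 2*π)) (hord : γ₁ < γ₂)
    (hξ : ξ ∈ Set.Ioo α (α + 2*π)) (hη : η ∈ Set.Ioo α (α + 2*π))
    (d1 : ξ ≠ γ₁) (d2 : ξ ≠ γ₂) (d3 : η ≠ γ₁) (d4 : η ≠ γ₂) (hξη : ξ < η)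
    {h1 h2 h3 h4 h5 h6}
    (hna : ¬ CircleGraph.Adj (mk2 (e ξ) (e η) h4 h5 h6) (mk2 (e γ₁) (e γ₂) h1 h2 h3)) :
    (γ₁ < ξ ∧ η < γ₂) ∨ η < γ₁ ∨ γ₂ < ξ ∨ (ξ < γ₁ ∧ γ₂ < η) := by
  rw [SimpleGraph.adj_comm, adj_in_iff hγ₁ hγ₂ hξ hη hord d1 d2 d3 d4 (ne_of_lt hξη)] at hna
  push_neg at hna
  by_cases hin : ξ ∈ Set.Ioo γ₁ γ₂
  · have hin' : η ∈ Set.Ioo γ₁ γ₂ := hna.1 hin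
    exact Or.inl ⟨hin.1, hin'.2⟩
  · have hout' : η ∉ Set.Ioo γ₁ γ₂ := hna.2 hin
    rcases lt_or_gt_of_ne d1 with h | h
    · -- ξ < γ₁
      rcases lt_or_gt_of_ne d3 with h' | h'
      · exact Or.inr (Or.inl h')
      · rcases lt_or_gt_of_ne d4 with h'' | h''
        · exact absurd ⟨h', h''⟩ hout'
        · exact Or.inr (Or.inr (Or.inr ⟨h, h''⟩))
    · -- γ₁ < ξ, and ξ ∉ (γ₁,γ₂) so γ₂ < ξ
      rcases lt_or_gt_of_ne d2 with h'' | h''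
      · exact absurd ⟨h, h''⟩ hin
      · exact Or.inr (Or.inr (Or.inl h''))

/-! ### The four configurations -/

lemma not_quads_touchPair {α β₁ β₂ : ℝ} (hβ₁ : β₁ ∈ Set.Ioo α (α + 2*π))
    (hβ₂ : β₂ ∈ Set.Ioo α (α + 2*π)) (h12 : β₁ < β₂) {p1 p2 p3 q1 q2 q3} :
    ¬ Quads {mk2 (e α) (e β₁) p1 p2 p3, mk2 (e α) (e β₂) q1 q2 q3} := by
  set B₁ := mk2 (e α) (e β₁) p1 p2 p3 with hB₁
  set B₂ := mk2 (e α) (e β₂) q1 q2 q3 with hB₂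
  have hw1 : Set.Ioo α β₁ ⊆ Set.Ioo α (α + 2*π) := fun x hx => ⟨hx.1, lt_trans hx.2 hβ₁.2⟩
  have hw2 : Set.Ioo β₁ β₂ ⊆ Set.Ioo α (α + 2*π) :=
    fun x hx => ⟨lt_trans hβ₁.1 hx.1, lt_trans hx.2 hβ₂.2⟩
  have hw3 : Set.Ioo β₂ (α + 2*π) ⊆ Set.Ioo α (α + 2*π) := fun x hx => ⟨lt_trans hβ₂.1 hx.1, hx.2⟩
  have Hcl : ∀ (l r : ℝ), Set.Ioo l r ⊆ Set.Ioo α (α + 2*π) → (r ≤ β₁ ∨ β₁ ≤ l) →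
      (r ≤ β₂ ∨ β₂ ≤ l) → ∀ G, InI l r G → Avoid {B₁, B₂} G := by
    intro l r hcont hs1 hs2 G hG C hC
    rcases hC with rfl | hC
    · exact avoid_base hβ₁ hcont hs1 hG
    · rw [Set.mem_singleton_iff.1 hC]
      exact avoid_base hβ₂ hcont hs2 hG
  apply not_quads_of_arcs (P := ![InI α β₁, InI β₁ β₂, InI β₂ (α + 2*π)])
  · intro k E F hE hF
    fin_cases k
    · exact reachable_same_interval hw1
        (fun G hG => Hcl α β₁ hw1 (Or.inl le_rfl) (Or.inl h12.le) G hG) hE hF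
    · exact reachable_same_interval hw2
        (fun G hG => Hcl β₁ β₂ hw2 (Or.inr le_rfl) (Or.inl le_rfl) G hG) hE hF
    · exact reachable_same_interval hw3
        (fun G hG => Hcl β₂ (α + 2*π) hw3 (Or.inr h12.le) (Or.inr le_rfl) G hG) hE hF
  · intro E hAv
    have hm1 : B₁ ∈ ({B₁, B₂} : Set Chord) := Set.mem_insert _ _
    have hm2 : B₂ ∈ ({B₁, B₂} : Set Chord) := Set.mem_insert_of_mem _ rfl
    have hαn : e α ∉ E.1 := not_endpoint_of_avoid hAv hm1 (by rw [hB₁]; exact Sym2.mem_mk_left _ _)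
    have hβ₁n : e β₁ ∉ E.1 :=
      not_endpoint_of_avoid hAv hm1 (by rw [hB₁]; exact Sym2.mem_mk_right _ _)
    have hβ₂n : e β₂ ∉ E.1 :=
      not_endpoint_of_avoid hAv hm2 (by rw [hB₂]; exact Sym2.mem_mk_right _ _)
    obtain ⟨ξ, η, hne, hξ, hη, hord, rfl⟩ := reps_sorted hαn
    have hξβ₁ : ξ ≠ β₁ := fun hc => hβ₁n (by rw [mk2_fst, ← hc]; exact Sym2.mem_mk_left _ _)
    have hηβ₁ : η ≠ β₁ := fun hc => hβ₁n (by rw [mk2_fst, ← hc]; exact Sym2.mem_mk_right _ _)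
    have hξβ₂ : ξ ≠ β₂ := fun hc => hβ₂n (by rw [mk2_fst, ← hc]; exact Sym2.mem_mk_left _ _)
    have hηβ₂ : η ≠ β₂ := fun hc => hβ₂n (by rw [mk2_fst, ← hc]; exact Sym2.mem_mk_right _ _)
    have s1 : β₁ < ξ ∨ η < β₁ :=
      side_of_not_adj_base hβ₁ hξ hη hξβ₁ hηβ₁ hord (hAv B₁ hm1).1
    have s2 : β₂ < ξ ∨ η < β₂ :=
      side_of_not_adj_base hβ₂ hξ hη hξβ₂ hηβ₂ hord (hAv B₂ hm2).1
    rcases s1 with h | h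
    · rcases s2 with h' | h'
      · exact ⟨2, ξ, η, hne, ⟨h', hξ.2⟩, ⟨lt_trans h' hord, hη.2⟩, hord, rfl⟩
      · exact ⟨1, ξ, η, hne, ⟨h, lt_trans hord h'⟩, ⟨lt_trans h hord, h'⟩, hord, rfl⟩
    · exact ⟨0, ξ, η, hne, ⟨hξ.1, lt_trans hord h⟩, ⟨hη.1, h⟩, hord, rfl⟩

lemma not_quads_triangle {α β₁ β₂ : ℝ} (hβ₁ : β₁ ∈ Set.Ioo α (α + 2*π))
    (hβ₂ : β₂ ∈ Set.Ioo α (α + 2*π)) (h12 : β₁ < β₂) {p1 p2 p3 q1 q2 q3 r1 r2 r3} :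
    ¬ Quads {mk2 (e α) (e β₁) p1 p2 p3, mk2 (e α) (e β₂) q1 q2 q3,
      mk2 (e β₁) (e β₂) r1 r2 r3} := by
  set B₁ := mk2 (e α) (e β₁) p1 p2 p3 with hB₁
  set B₂ := mk2 (e α) (e β₂) q1 q2 q3 with hB₂
  set T := mk2 (e β₁) (e β₂) r1 r2 r3 with hT
  have hw1 : Set.Ioo α β₁ ⊆ Set.Ioo α (α + 2*π) := fun x hx => ⟨hx.1, lt_trans hx.2 hβ₁.2⟩
  have hw2 : Set.Ioo β₁ β₂ ⊆ Set.Ioo α (α + 2*π) :=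
    fun x hx => ⟨lt_trans hβ₁.1 hx.1, lt_trans hx.2 hβ₂.2⟩
  have hw3 : Set.Ioo β₂ (α + 2*π) ⊆ Set.Ioo α (α + 2*π) := fun x hx => ⟨lt_trans hβ₂.1 hx.1, hx.2⟩
  have Hcl : ∀ (l r : ℝ), Set.Ioo l r ⊆ Set.Ioo α (α + 2*π) → (r ≤ β₁ ∨ β₁ ≤ l) →
      (r ≤ β₂ ∨ β₂ ≤ l) → (r ≤ β₁ ∨ β₂ ≤ l ∨ (β₁ ≤ l ∧ r ≤ β₂)) →
      ∀ G, InI l r G → Avoid {B₁, B₂, T} G := by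
    intro l r hcont hs1 hs2 hs3 G hG C hC
    rcases hC with rfl | hC
    · exact avoid_base hβ₁ hcont hs1 hG
    · rcases hC with rfl | hC
      · exact avoid_base hβ₂ hcont hs2 hG
      · rw [Set.mem_singleton_iff.1 hC]
        exact avoid_in hβ₁ hβ₂ h12 hcont hs3 hG
  apply not_quads_of_arcs (P := ![InI α β₁, InI β₁ β₂, InI β₂ (α + 2*π)])
  · intro k E F hE hF
    fin_cases k
    · exact reachable_same_interval hw1
        (fun G hG => Hcl α β₁ hw1 (Or.inl le_rfl) (Or.inl h12.le) (Or.inl le_rfl) G hG) hE hF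
    · exact reachable_same_interval hw2
        (fun G hG => Hcl β₁ β₂ hw2 (Or.inr le_rfl) (Or.inl le_rfl)
          (Or.inr (Or.inr ⟨le_rfl, le_rfl⟩)) G hG) hE hF
    · exact reachable_same_interval hw3
        (fun G hG => Hcl β₂ (α + 2*π) hw3 (Or.inr h12.le) (Or.inr le_rfl)
          (Or.inr (Or.inl le_rfl)) G hG) hE hF
  · intro E hAv
    have hm1 : B₁ ∈ ({B₁, B₂, T} : Set Chord) := Set.mem_insert _ _
    have hm2 : B₂ ∈ ({B₁, B₂, T} : Set Chord) := Set.mem_insert_of_mem _ (Set.mem_insert _ _)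
    have hαn : e α ∉ E.1 := not_endpoint_of_avoid hAv hm1 (by rw [hB₁]; exact Sym2.mem_mk_left _ _)
    have hβ₁n : e β₁ ∉ E.1 :=
      not_endpoint_of_avoid hAv hm1 (by rw [hB₁]; exact Sym2.mem_mk_right _ _)
    have hβ₂n : e β₂ ∉ E.1 :=
      not_endpoint_of_avoid hAv hm2 (by rw [hB₂]; exact Sym2.mem_mk_right _ _)
    obtain ⟨ξ, η, hne, hξ, hη, hord, rfl⟩ := reps_sorted hαn
    have hξβ₁ : ξ ≠ β₁ := fun hc => hβ₁n (by rw [mk2_fst, ← hc]; exact Sym2.mem_mk_left _ _)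
    have hηβ₁ : η ≠ β₁ := fun hc => hβ₁n (by rw [mk2_fst, ← hc]; exact Sym2.mem_mk_right _ _)
    have hξβ₂ : ξ ≠ β₂ := fun hc => hβ₂n (by rw [mk2_fst, ← hc]; exact Sym2.mem_mk_left _ _)
    have hηβ₂ : η ≠ β₂ := fun hc => hβ₂n (by rw [mk2_fst, ← hc]; exact Sym2.mem_mk_right _ _)
    have s1 : β₁ < ξ ∨ η < β₁ :=
      side_of_not_adj_base hβ₁ hξ hη hξβ₁ hηβ₁ hord (hAv B₁ hm1).1
    have s2 : β₂ < ξ ∨ η < β₂ :=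
      side_of_not_adj_base hβ₂ hξ hη hξβ₂ hηβ₂ hord (hAv B₂ hm2).1
    rcases s1 with h | h
    · rcases s2 with h' | h'
      · exact ⟨2, ξ, η, hne, ⟨h', hξ.2⟩, ⟨lt_trans h' hord, hη.2⟩, hord, rfl⟩
      · exact ⟨1, ξ, η, hne, ⟨h, lt_trans hord h'⟩, ⟨lt_trans h hord, h'⟩, hord, rfl⟩
    · exact ⟨0, ξ, η, hne, ⟨hξ.1, lt_trans hord h⟩, ⟨hη.1, h⟩, hord, rfl⟩

lemma quads_star {α β₁ β₂ β₃ : ℝ} (hβ₁ : β₁ ∈ Set.Ioo α (α + 2*π))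
    (hβ₂ : β₂ ∈ Set.Ioo α (α + 2*π)) (hβ₃ : β₃ ∈ Set.Ioo α (α + 2*π))
    (h12 : β₁ < β₂) (h23 : β₂ < β₃) {p1 p2 p3 q1 q2 q3 r1 r2 r3} :
    Quads {mk2 (e α) (e β₁) p1 p2 p3, mk2 (e α) (e β₂) q1 q2 q3,
      mk2 (e α) (e β₃) r1 r2 r3} := by
  set B₁ := mk2 (e α) (e β₁) p1 p2 p3 with hB₁
  set B₂ := mk2 (e α) (e β₂) q1 q2 q3 with hB₂
  set B₃ := mk2 (e α) (e β₃) r1 r2 r3 with hB₃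
  have hm1 : B₁ ∈ ({B₁, B₂, B₃} : Set Chord) := Set.mem_insert _ _
  have hm2 : B₂ ∈ ({B₁, B₂, B₃} : Set Chord) := Set.mem_insert_of_mem _ (Set.mem_insert _ _)
  have hm3 : B₃ ∈ ({B₁, B₂, B₃} : Set Chord) :=
    Set.mem_insert_of_mem _ (Set.mem_insert_of_mem _ rfl)
  apply quads_of_arcs (α := α)
    (A := ![(α, β₁), (β₁, β₂), (β₂, β₃), (β₃, α + 2*π)])
  · intro i j hij
    fin_cases i <;> fin_cases j <;> simp_all <;> try linarith
  · intro i
    fin_cases i <;> simp <;> linarith [hβ₁.1, hβ₁.2, hβ₂.1, hβ₂.2, hβ₃.1, hβ₃.2]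
  · intro i
    fin_cases i <;> intro x hx <;> simp at hx ⊢ <;>
      constructor <;> linarith [hβ₁.1, hβ₁.2, hβ₂.1, hβ₂.2, hβ₃.1, hβ₃.2, hx.1, hx.2]
  · intro i G hG C hC
    have hw : ∀ i : Fin 4, Set.Ioo (![(α, β₁), (β₁, β₂), (β₂, β₃), (β₃, α + 2*π)] i).1
        (![(α, β₁), (β₁, β₂), (β₂, β₃), (β₃, α + 2*π)] i).2 ⊆ Set.Ioo α (α + 2*π) := by
      intro i
      fin_cases i <;> intro x hx <;> simp at hx ⊢ <;>
        constructor <;> linarith [hβ₁.1, hβ₁.2, hβ₂.1, hβ₂.2, hβ₃.1, hβ₃.2, hx.1, hx.2]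
    rcases hC with rfl | hC
    · fin_cases i <;>
      [exact avoid_base hβ₁ (hw 0) (Or.inl le_rfl) hG;
       exact avoid_base hβ₁ (hw 1) (Or.inr le_rfl) hG;
       exact avoid_base hβ₁ (hw 2) (Or.inr h12.le) hG;
       exact avoid_base hβ₁ (hw 3) (Or.inr (show β₁ ≤ β₃ by linarith)) hG]
    · rcases hC with rfl | hC
      · fin_cases i <;>
        [exact avoid_base hβ₂ (hw 0) (Or.inl h12.le) hG;
         exact avoid_base hβ₂ (hw 1) (Or.inl le_rfl) hG;
         exact avoid_base hβ₂ (hw 2) (Or.inr le_rfl) hG;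
         exact avoid_base hβ₂ (hw 3) (Or.inr h23.le) hG]
      · rw [Set.mem_singleton_iff.1 hC]
        fin_cases i <;>
        [exact avoid_base hβ₃ (hw 0) (Or.inl (show β₁ ≤ β₃ by linarith)) hG;
         exact avoid_base hβ₃ (hw 1) (Or.inl h23.le) hG;
         exact avoid_base hβ₃ (hw 2) (Or.inl le_rfl) hG;
         exact avoid_base hβ₃ (hw 3) (Or.inr le_rfl) hG]
  · intro E hAv
    have hαn : e α ∉ E.1 := not_endpoint_of_avoid hAv hm1 (by rw [hB₁]; exact Sym2.mem_mk_left _ _)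
    have hβ₁n : e β₁ ∉ E.1 :=
      not_endpoint_of_avoid hAv hm1 (by rw [hB₁]; exact Sym2.mem_mk_right _ _)
    have hβ₂n : e β₂ ∉ E.1 :=
      not_endpoint_of_avoid hAv hm2 (by rw [hB₂]; exact Sym2.mem_mk_right _ _)
    have hβ₃n : e β₃ ∉ E.1 :=
      not_endpoint_of_avoid hAv hm3 (by rw [hB₃]; exact Sym2.mem_mk_right _ _)
    obtain ⟨ξ, η, hne, hξ, hη, hord, rfl⟩ := reps_sorted hαn
    have hξβ₁ : ξ ≠ β₁ := fun hc => hβ₁n (by rw [mk2_fst, ← hc]; exact Sym2.mem_mk_left _ _)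
    have hηβ₁ : η ≠ β₁ := fun hc => hβ₁n (by rw [mk2_fst, ← hc]; exact Sym2.mem_mk_right _ _)
    have hξβ₂ : ξ ≠ β₂ := fun hc => hβ₂n (by rw [mk2_fst, ← hc]; exact Sym2.mem_mk_left _ _)
    have hηβ₂ : η ≠ β₂ := fun hc => hβ₂n (by rw [mk2_fst, ← hc]; exact Sym2.mem_mk_right _ _)
    have hξβ₃ : ξ ≠ β₃ := fun hc => hβ₃n (by rw [mk2_fst, ← hc]; exact Sym2.mem_mk_left _ _)
    have hηβ₃ : η ≠ β₃ := fun hc => hβ₃n (by rw [mk2_fst, ← hc]; exact Sym2.mem_mk_right _ _)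
    have s1 : β₁ < ξ ∨ η < β₁ :=
      side_of_not_adj_base hβ₁ hξ hη hξβ₁ hηβ₁ hord (hAv B₁ hm1).1
    have s2 : β₂ < ξ ∨ η < β₂ :=
      side_of_not_adj_base hβ₂ hξ hη hξβ₂ hηβ₂ hord (hAv B₂ hm2).1
    have s3 : β₃ < ξ ∨ η < β₃ :=
      side_of_not_adj_base hβ₃ hξ hη hξβ₃ hηβ₃ hord (hAv B₃ hm3).1
    rcases s1 with h1 | h1
    · rcases s2 with h2 | h2
      · rcases s3 with h3 | h3
        · exact ⟨3, ξ, η, hne, ⟨h3, hξ.2⟩, ⟨lt_trans h3 hord, hη.2⟩, hord, rfl⟩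
        · exact ⟨2, ξ, η, hne, ⟨h2, lt_trans hord h3⟩, ⟨lt_trans h2 hord, h3⟩, hord, rfl⟩
      · exact ⟨1, ξ, η, hne, ⟨h1, lt_trans hord h2⟩, ⟨lt_trans h1 hord, h2⟩, hord, rfl⟩
    · exact ⟨0, ξ, η, hne, ⟨hξ.1, lt_trans hord h1⟩, ⟨hη.1, h1⟩, hord, rfl⟩

lemma quads_cross {α β γ₁ γ₂ : ℝ} (hβ : β ∈ Set.Ioo α (α + 2*π))
    (hγ₁ : γ₁ ∈ Set.Ioo α (α + 2*π)) (hγ₂ : γ₂ ∈ Set.Ioo α (α + 2*π))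
    (h1 : γ₁ < β) (h2 : β < γ₂) {p1 p2 p3 q1 q2 q3} :
    Quads {mk2 (e α) (e β) p1 p2 p3, mk2 (e γ₁) (e γ₂) q1 q2 q3} := by
  set B := mk2 (e α) (e β) p1 p2 p3 with hB
  set D := mk2 (e γ₁) (e γ₂) q1 q2 q3 with hD
  have hm1 : B ∈ ({B, D} : Set Chord) := Set.mem_insert _ _
  have hm2 : D ∈ ({B, D} : Set Chord) := Set.mem_insert_of_mem _ rfl
  have hγord : γ₁ < γ₂ := lt_trans h1 h2
  apply quads_of_arcs (α := α)
    (A := ![(α, γ₁), (γ₁, β), (β, γ₂), (γ₂, α + 2*π)])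
  · intro i j hij
    fin_cases i <;> fin_cases j <;> simp_all <;> try linarith
  · intro i
    fin_cases i <;> simp <;> linarith [hβ.1, hβ.2, hγ₁.1, hγ₁.2, hγ₂.1, hγ₂.2]
  · intro i
    fin_cases i <;> intro x hx <;> simp at hx ⊢ <;>
      constructor <;> linarith [hβ.1, hβ.2, hγ₁.1, hγ₁.2, hγ₂.1, hγ₂.2, hx.1, hx.2]
  · intro i G hG C hC
    have hw : ∀ i : Fin 4, Set.Ioo (![(α, γ₁), (γ₁, β), (β, γ₂), (γ₂, α + 2*π)] i).1
        (![(α, γ₁), (γ₁, β), (β, γ₂), (γ₂, α + 2*π)] i).2 ⊆ Set.Ioo α (α + 2*π) := by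
      intro i
      fin_cases i <;> intro x hx <;> simp at hx ⊢ <;>
        constructor <;> linarith [hβ.1, hβ.2, hγ₁.1, hγ₁.2, hγ₂.1, hγ₂.2, hx.1, hx.2]
    rcases hC with rfl | hC
    · fin_cases i <;>
      [exact avoid_base hβ (hw 0) (Or.inl h1.le) hG;
       exact avoid_base hβ (hw 1) (Or.inl le_rfl) hG;
       exact avoid_base hβ (hw 2) (Or.inr le_rfl) hG;
       exact avoid_base hβ (hw 3) (Or.inr h2.le) hG]
    · rw [Set.mem_singleton_iff.1 hC]
      fin_cases i <;>
      [exact avoid_in hγ₁ hγ₂ hγord (hw 0) (Or.inl le_rfl) hG;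
       exact avoid_in hγ₁ hγ₂ hγord (hw 1) (Or.inr (Or.inr ⟨le_rfl, h2.le⟩)) hG;
       exact avoid_in hγ₁ hγ₂ hγord (hw 2) (Or.inr (Or.inr ⟨h1.le, le_rfl⟩)) hG;
       exact avoid_in hγ₁ hγ₂ hγord (hw 3) (Or.inr (Or.inl le_rfl)) hG]
  · intro E hAv
    have hαn : e α ∉ E.1 := not_endpoint_of_avoid hAv hm1 (by rw [hB]; exact Sym2.mem_mk_left _ _)
    have hβn : e β ∉ E.1 :=
      not_endpoint_of_avoid hAv hm1 (by rw [hB]; exact Sym2.mem_mk_right _ _)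
    have hγ₁n : e γ₁ ∉ E.1 :=
      not_endpoint_of_avoid hAv hm2 (by rw [hD]; exact Sym2.mem_mk_left _ _)
    have hγ₂n : e γ₂ ∉ E.1 :=
      not_endpoint_of_avoid hAv hm2 (by rw [hD]; exact Sym2.mem_mk_right _ _)
    obtain ⟨ξ, η, hne, hξ, hη, hord, rfl⟩ := reps_sorted hαn
    have hξβ : ξ ≠ β := fun hc => hβn (by rw [mk2_fst, ← hc]; exact Sym2.mem_mk_left _ _)
    have hηβ : η ≠ β := fun hc => hβn (by rw [mk2_fst, ← hc]; exact Sym2.mem_mk_right _ _)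
    have hξγ₁ : ξ ≠ γ₁ := fun hc => hγ₁n (by rw [mk2_fst, ← hc]; exact Sym2.mem_mk_left _ _)
    have hηγ₁ : η ≠ γ₁ := fun hc => hγ₁n (by rw [mk2_fst, ← hc]; exact Sym2.mem_mk_right _ _)
    have hξγ₂ : ξ ≠ γ₂ := fun hc => hγ₂n (by rw [mk2_fst, ← hc]; exact Sym2.mem_mk_left _ _)
    have hηγ₂ : η ≠ γ₂ := fun hc => hγ₂n (by rw [mk2_fst, ← hc]; exact Sym2.mem_mk_right _ _)
    have s1 : β < ξ ∨ η < β :=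
      side_of_not_adj_base hβ hξ hη hξβ hηβ hord (hAv B hm1).1
    have s2 := side_of_not_adj_in hγ₁ hγ₂ hγord hξ hη hξγ₁ hξγ₂ hηγ₁ hηγ₂ hord (hAv D hm2).1
    rcases s1 with h | h
    · rcases s2 with ⟨u, v⟩ | u | u | ⟨u, v⟩
      · exact ⟨2, ξ, η, hne, ⟨h, lt_trans hord v⟩, ⟨lt_trans h hord, v⟩, hord, rfl⟩
      · exact absurd (lt_trans h1 (lt_trans h hord)) (by linarith)
      · exact ⟨3, ξ, η, hne, ⟨u, hξ.2⟩, ⟨lt_trans u hord, hη.2⟩, hord, rfl⟩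
      · exact absurd h (by linarith)
    · rcases s2 with ⟨u, v⟩ | u | u | ⟨u, v⟩
      · exact ⟨1, ξ, η, hne, ⟨u, lt_trans hord h⟩, ⟨lt_trans u hord, h⟩, hord, rfl⟩
      · exact ⟨0, ξ, η, hne, ⟨hξ.1, lt_trans hord u⟩, ⟨hη.1, u⟩, hord, rfl⟩
      · exact absurd u (by linarith)
      · exact absurd v (by linarith)

/-! ### Touching chords, characterized graph-theoretically -/

def Touch (C D : Chord) : Prop := C ≠ D ∧ ∃ z, z ∈ C.1 ∧ z ∈ D.1

lemma touch_adj {C D : Chord} (h : Touch C D) : CircleGraph.Adj C D := by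
  obtain ⟨hne, z, h1, h2⟩ := h
  exact adj_of_touch hne h1 h2

lemma shared_unique {C D : Chord} (hne : C ≠ D) {z w : ℂ}
    (hzC : z ∈ C.1) (hzD : z ∈ D.1) (hwC : w ∈ C.1) (hwD : w ∈ D.1) : z = w := by
  by_contra hzw
  exact hne (chord_ext ((sym2_eq_of_mem hzw hzC hwC).trans (sym2_eq_of_mem hzw hzD hwD).symm))

lemma other_endpoint {C : Chord} {z : ℂ} (hz : z ∈ C.1) :
    ∃ w, w ∈ S1 ∧ z ≠ w ∧ C.1 = s(z, w) := by
  obtain ⟨u, v, hu, hv, huv, rfl⟩ := chord_cases C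
  rcases Sym2.mem_iff.1 hz with h | h
  · exact ⟨v, hv, h ▸ huv, by rw [mk2_fst, h]⟩
  · refine ⟨u, hu, h ▸ (Ne.symm huv), by rw [mk2_fst, h]; exact Sym2.eq_swap⟩

lemma touch_not_quads {C D : Chord} (hT : Touch C D) : ¬ Quads {C, D} := by
  obtain ⟨hne, z, hzC, hzD⟩ := hT
  obtain ⟨a, haS, hza, hCa⟩ := other_endpoint hzC
  obtain ⟨b, hbS, hzb, hDb⟩ := other_endpoint hzD
  have hab : a ≠ b := fun h => hne (chord_ext (hCa.trans (h ▸ hDb).symm))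
  obtain ⟨α, hα01, hzα⟩ := exists_rep (C.2.1 z hzC) 0
  obtain ⟨β₁, hβ₁, hb1⟩ := exists_rep' haS (show a ≠ e α by rw [hzα]; exact hza.symm)
  obtain ⟨β₂, hβ₂, hb2⟩ := exists_rep' hbS (show b ≠ e α by rw [hzα]; exact hzb.symm)
  have hb12 : β₁ ≠ β₂ := fun h => hab (by rw [← hb1, ← hb2, h])
  have eC : C = mk2 (e α) (e β₁) (e_mem α) (e_mem β₁)
      (by rw [hzα, hb1]; exact hza) := by
    apply chord_ext; rw [mk2_fst, hCa, hzα, hb1]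
  have eD : D = mk2 (e α) (e β₂) (e_mem α) (e_mem β₂)
      (by rw [hzα, hb2]; exact hzb) := by
    apply chord_ext; rw [mk2_fst, hDb, hzα, hb2]
  rcases lt_or_gt_of_ne hb12 with h | h
  · rw [eC, eD]
    exact not_quads_touchPair hβ₁ hβ₂ h
  · rw [eC, eD, Set.pair_comm]
    exact not_quads_touchPair hβ₂ hβ₁ h

lemma quads_of_adj_not_touch {C D : Chord} (hAdj : CircleGraph.Adj C D) (hnT : ¬ Touch C D) :
    Quads {C, D} := by
  have hne : C ≠ D := hAdj.1
  have hnsh : ∀ z, z ∈ C.1 → z ∉ D.1 := by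
    intro z h1 h2
    exact hnT ⟨hne, z, h1, h2⟩
  obtain ⟨a, b, haS, hbS, hab, rfl⟩ := chord_cases C
  obtain ⟨α, hα01, hzα⟩ := exists_rep haS 0
  obtain ⟨β, hβ, hbβ⟩ := exists_rep' hbS (show b ≠ e α by rw [hzα]; exact hab.symm)
  have hαD : e α ∉ D.1 := by
    rw [hzα]
    exact hnsh a (Sym2.mem_mk_left a b)
  obtain ⟨γ₁, γ₂, hneγ, hγ₁, hγ₂, hγord, rfl⟩ := reps_sorted hαD
  have eC : mk2 a b haS hbS hab = mk2 (e α) (e β) (e_mem α) (e_mem β)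
      (by rw [hzα, hbβ]; exact hab) := by
    apply chord_ext; rw [mk2_fst, mk2_fst, hzα, hbβ]
  have hbn : e β ∉ (mk2 (e γ₁) (e γ₂) (e_mem γ₁) (e_mem γ₂) hneγ).1 := by
    rw [hbβ]
    exact fun hc => hnsh b (Sym2.mem_mk_right a b) hc
  have hβγ₁ : β ≠ γ₁ := fun h => hbn (by rw [mk2_fst, ← h]; exact Sym2.mem_mk_left _ _)
  have hβγ₂ : β ≠ γ₂ := fun h => hbn (by rw [mk2_fst, ← h]; exact Sym2.mem_mk_right _ _)
  rw [eC] at hAdj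
  rw [adj_base_iff hβ hγ₁ hγ₂ hβγ₁ hβγ₂ (ne_of_lt hγord)] at hAdj
  have hsep : γ₁ < β ∧ β < γ₂ := by
    rcases mul_neg_iff.1 hAdj with ⟨h1, h2⟩ | ⟨h1, h2⟩
    · constructor <;> nlinarith
    · constructor <;> nlinarith
  rw [eC]
  exact quads_cross hβ hγ₁ hγ₂ hsep.1 hsep.2

/-- Three pairwise distinct chords through a common point give `Quads`. -/
lemma quads_of_concur {C₁ C₂ C₃ : Chord} (h12 : C₁ ≠ C₂) (h13 : C₁ ≠ C₃) (h23 : C₂ ≠ C₃)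
    {z : ℂ} (hz1 : z ∈ C₁.1) (hz2 : z ∈ C₂.1) (hz3 : z ∈ C₃.1) :
    Quads {C₁, C₂, C₃} := by
  obtain ⟨a₁, ha₁S, hza₁, hC₁⟩ := other_endpoint hz1
  obtain ⟨a₂, ha₂S, hza₂, hC₂⟩ := other_endpoint hz2
  obtain ⟨a₃, ha₃S, hza₃, hC₃⟩ := other_endpoint hz3
  have ha12 : a₁ ≠ a₂ := fun h => h12 (chord_ext (hC₁.trans (h ▸ hC₂).symm))
  have ha13 : a₁ ≠ a₃ := fun h => h13 (chord_ext (hC₁.trans (h ▸ hC₃).symm))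
  have ha23 : a₂ ≠ a₃ := fun h => h23 (chord_ext (hC₂.trans (h ▸ hC₃).symm))
  obtain ⟨α, hα01, hzα⟩ := exists_rep (C₁.2.1 z hz1) 0
  obtain ⟨β₁, hβ₁, hb1⟩ := exists_rep' ha₁S (show a₁ ≠ e α by rw [hzα]; exact hza₁.symm)
  obtain ⟨β₂, hβ₂, hb2⟩ := exists_rep' ha₂S (show a₂ ≠ e α by rw [hzα]; exact hza₂.symm)
  obtain ⟨β₃, hβ₃, hb3⟩ := exists_rep' ha₃S (show a₃ ≠ e α by rw [hzα]; exact hza₃.symm)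
  have hb12 : β₁ ≠ β₂ := fun h => ha12 (by rw [← hb1, ← hb2, h])
  have hb13 : β₁ ≠ β₃ := fun h => ha13 (by rw [← hb1, ← hb3, h])
  have hb23 : β₂ ≠ β₃ := fun h => ha23 (by rw [← hb2, ← hb3, h])
  have eC₁ : C₁ = mk2 (e α) (e β₁) (e_mem α) (e_mem β₁) (by rw [hzα, hb1]; exact hza₁) := by
    apply chord_ext; rw [mk2_fst, hC₁, hzα, hb1]
  have eC₂ : C₂ = mk2 (e α) (e β₂) (e_mem α) (e_mem β₂) (by rw [hzα, hb2]; exact hza₂) := by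
    apply chord_ext; rw [mk2_fst, hC₂, hzα, hb2]
  have eC₃ : C₃ = mk2 (e α) (e β₃) (e_mem α) (e_mem β₃) (by rw [hzα, hb3]; exact hza₃) := by
    apply chord_ext; rw [mk2_fst, hC₃, hzα, hb3]
  rw [eC₁, eC₂, eC₃]
  rcases lt_or_gt_of_ne hb12 with o12 | o12 <;> rcases lt_or_gt_of_ne hb13 with o13 | o13 <;>
    rcases lt_or_gt_of_ne hb23 with o23 | o23
  · exact quads_star hβ₁ hβ₂ hβ₃ o12 o23
  · rw [show ∀ P Q R : Chord, ({P, Q, R} : Set Chord) = {P, R, Q} from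
      fun P Q R => by ext x; simp [Set.mem_insert_iff]; tauto]
    exact quads_star hβ₁ hβ₃ hβ₂ o13 o23
  · exact absurd o23 (by linarith)
  · rw [show ∀ P Q R : Chord, ({P, Q, R} : Set Chord) = {R, P, Q} from
      fun P Q R => by ext x; simp [Set.mem_insert_iff]; tauto]
    exact quads_star hβ₃ hβ₁ hβ₂ o13 o12
  · rw [show ∀ P Q R : Chord, ({P, Q, R} : Set Chord) = {Q, P, R} from
      fun P Q R => by ext x; simp [Set.mem_insert_iff]; tauto]
    exact quads_star hβ₂ hβ₁ hβ₃ o12 o13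
  · exact absurd o23 (by linarith)
  · rw [show ∀ P Q R : Chord, ({P, Q, R} : Set Chord) = {Q, R, P} from
      fun P Q R => by ext x; simp [Set.mem_insert_iff]; tauto]
    exact quads_star hβ₂ hβ₃ hβ₁ o23 o13
  · rw [show ∀ P Q R : Chord, ({P, Q, R} : Set Chord) = {R, Q, P} from
      fun P Q R => by ext x; simp [Set.mem_insert_iff]; tauto]
    exact quads_star hβ₃ hβ₂ hβ₁ o23 o12

/-- Three pairwise touching chords with no common point form a triangle, hence no `Quads`. -/
lemma not_quads_of_touch_triple {C₁ C₂ C₃ : Chord}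
    (t12 : Touch C₁ C₂) (t13 : Touch C₁ C₃) (t23 : Touch C₂ C₃)
    (hnc : ¬ ∃ z, z ∈ C₁.1 ∧ z ∈ C₂.1 ∧ z ∈ C₃.1) : ¬ Quads {C₁, C₂, C₃} := by
  obtain ⟨ne12, x, hx1, hx2⟩ := t12
  obtain ⟨ne13, y, hy1, hy3⟩ := t13
  obtain ⟨ne23, w, hw2, hw3⟩ := t23
  have hxy : x ≠ y := fun h => hnc ⟨x, hx1, hx2, h ▸ hy3⟩
  have hxw : x ≠ w := fun h => hnc ⟨x, hx1, hx2, h ▸ hw3⟩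
  have hyw : y ≠ w := fun h => hnc ⟨y, hy1, h ▸ hw2, hy3⟩
  have hC₁ : C₁.1 = s(x, y) := sym2_eq_of_mem hxy hx1 hy1
  have hC₂ : C₂.1 = s(x, w) := sym2_eq_of_mem hxw hx2 hw2
  have hC₃ : C₃.1 = s(y, w) := sym2_eq_of_mem hyw hy3 hw3
  have hxS : x ∈ S1 := C₁.2.1 x hx1
  have hyS : y ∈ S1 := C₁.2.1 y hy1
  have hwS : w ∈ S1 := C₂.2.1 w hw2
  obtain ⟨α, hα01, hzα⟩ := exists_rep hxS 0
  obtain ⟨β₁, hβ₁, hb1⟩ := exists_rep' hyS (show y ≠ e α by rw [hzα]; exact hxy.symm)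
  obtain ⟨β₂, hβ₂, hb2⟩ := exists_rep' hwS (show w ≠ e α by rw [hzα]; exact hxw.symm)
  have hb12 : β₁ ≠ β₂ := fun h => hyw (by rw [← hb1, ← hb2, h])
  have eC₁ : C₁ = mk2 (e α) (e β₁) (e_mem α) (e_mem β₁) (by rw [hzα, hb1]; exact hxy) := by
    apply chord_ext; rw [mk2_fst, hC₁, hzα, hb1]
  have eC₂ : C₂ = mk2 (e α) (e β₂) (e_mem α) (e_mem β₂) (by rw [hzα, hb2]; exact hxw) := by
    apply chord_ext; rw [mk2_fst, hC₂, hzα, hb2]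
  have eC₃ : C₃ = mk2 (e β₁) (e β₂) (e_mem β₁) (e_mem β₂)
      (by rw [hb1, hb2]; exact hyw) := by
    apply chord_ext; rw [mk2_fst, hC₃, hb1, hb2]
  have eC₃' : C₃ = mk2 (e β₂) (e β₁) (e_mem β₂) (e_mem β₁)
      (by rw [hb1, hb2]; exact fun h => hyw h.symm) := by
    apply chord_ext; rw [mk2_fst, hC₃, hb1, hb2]; exact Sym2.eq_swap
  rcases lt_or_gt_of_ne hb12 with o | o
  · rw [eC₁, eC₂, eC₃]
    exact not_quads_triangle hβ₁ hβ₂ o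
  · rw [eC₁, eC₂, eC₃',
      show ∀ P Q R : Chord, ({P, Q, R} : Set Chord) = {Q, P, R} from
        fun P Q R => by ext t; simp [Set.mem_insert_iff]; tauto]
    exact not_quads_triangle hβ₂ hβ₁ o

/-! ### Automorphisms preserve touching and concurrence -/

lemma image_pair (φ : CircleGraph ≃g CircleGraph) (C D : Chord) :
    (fun X => φ X) '' {C, D} = {φ C, φ D} := by
  simp [Set.image_insert_eq]

lemma image_triple (φ : CircleGraph ≃g CircleGraph) (C D E : Chord) :
    (fun X => φ X) '' {C, D, E} = {φ C, φ D, φ E} := by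
  simp [Set.image_insert_eq]

lemma touch_map (φ : CircleGraph ≃g CircleGraph) {C D : Chord} (h : Touch C D) :
    Touch (φ C) (φ D) := by
  by_contra hnT
  have hAdj : CircleGraph.Adj (φ C) (φ D) := φ.map_adj_iff.2 (touch_adj h)
  have hQ : Quads {φ C, φ D} := quads_of_adj_not_touch hAdj hnT
  rw [← image_pair, quads_image] at hQ
  exact touch_not_quads h hQ

lemma concur_map (φ : CircleGraph ≃g CircleGraph) {C₁ C₂ C₃ : Chord}
    (h12 : C₁ ≠ C₂) (h13 : C₁ ≠ C₃) (h23 : C₂ ≠ C₃) {z : ℂ}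
    (hz1 : z ∈ C₁.1) (hz2 : z ∈ C₂.1) (hz3 : z ∈ C₃.1) :
    ∃ w, w ∈ (φ C₁).1 ∧ w ∈ (φ C₂).1 ∧ w ∈ (φ C₃).1 := by
  by_contra hnc
  push_neg at hnc
  have t12 : Touch (φ C₁) (φ C₂) := touch_map φ ⟨h12, z, hz1, hz2⟩
  have t13 : Touch (φ C₁) (φ C₃) := touch_map φ ⟨h13, z, hz1, hz3⟩
  have t23 : Touch (φ C₂) (φ C₃) := touch_map φ ⟨h23, z, hz2, hz3⟩
  apply not_quads_of_touch_triple t12 t13 t23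
    (by rintro ⟨w, a, b, c⟩; exact hnc w a b c)
  rw [← image_triple, quads_image]
  exact quads_of_concur h12 h13 h23 hz1 hz2 hz3

/-! ### The induced point map of an automorphism -/

lemma neg_mem_S1 {z : ℂ} (h : z ∈ S1) : -z ∈ S1 := by
  have : ‖z‖ = 1 := h
  show ‖-z‖ = 1
  rwa [norm_neg]

lemma I_mul_mem_S1 {z : ℂ} (h : z ∈ S1) : Complex.I * z ∈ S1 := by
  have : ‖z‖ = 1 := h
  show ‖Complex.I * z‖ = 1
  rw [norm_mul, Complex.norm_I, one_mul]
  exact this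

lemma z_ne_zero {z : ℂ} (h : z ∈ S1) : z ≠ 0 := by
  intro hc
  have : ‖z‖ = 1 := h
  rw [hc] at this
  simp at this

lemma z_ne_neg {z : ℂ} (h : z ∈ S1) : z ≠ -z := by
  intro hc
  apply z_ne_zero h
  linear_combination hc / 2

lemma z_ne_I_mul {z : ℂ} (h : z ∈ S1) : z ≠ Complex.I * z := by
  intro hc
  apply z_ne_zero h
  have h2 : z * (1 - Complex.I) = 0 := by linear_combination hc
  rcases mul_eq_zero.1 h2 with h | h
  · exact h
  · exfalso
    have := congrArg Complex.im h
    simp at this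
lemma neg_ne_I_mul {z : ℂ} (h : z ∈ S1) : -z ≠ Complex.I * z := by
  intro hc
  apply z_ne_zero h
  have h2 : z * (1 + Complex.I) = 0 := by linear_combination -hc
  rcases mul_eq_zero.1 h2 with h | h
  · exact h
  · exfalso
    have := congrArg Complex.im h
    simp at this

def K1 (p : S1) : Chord := mk2 p (-p) p.2 (neg_mem_S1 p.2) (z_ne_neg p.2)
def K2 (p : S1) : Chord := mk2 p (Complex.I * p) p.2 (I_mul_mem_S1 p.2) (z_ne_I_mul p.2)

lemma K1_ne_K2 (p : S1) : K1 p ≠ K2 p := by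
  intro h
  have := congrArg (·.1) h
  simp only [K1, K2, mk2_fst] at this
  rcases Sym2.eq_iff.1 this with ⟨_, h2⟩ | ⟨h1, _⟩
  · exact neg_ne_I_mul p.2 h2
  · exact z_ne_I_mul p.2 h1

lemma touch_K12 (p : S1) : Touch (K1 p) (K2 p) :=
  ⟨K1_ne_K2 p, p, Sym2.mem_mk_left _ _, Sym2.mem_mk_left _ _⟩

def g0 (φ : CircleGraph ≃g CircleGraph) (p : S1) : S1 :=
  ⟨Classical.choose (touch_map φ (touch_K12 p)).2,
   (φ (K1 p)).2.1 _ (Classical.choose_spec (touch_map φ (touch_K12 p)).2).1⟩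

lemma g0_spec₁ (φ : CircleGraph ≃g CircleGraph) (p : S1) :
    (g0 φ p : ℂ) ∈ (φ (K1 p)).1 :=
  (Classical.choose_spec (touch_map φ (touch_K12 p)).2).1

lemma g0_spec₂ (φ : CircleGraph ≃g CircleGraph) (p : S1) :
    (g0 φ p : ℂ) ∈ (φ (K2 p)).1 :=
  (Classical.choose_spec (touch_map φ (touch_K12 p)).2).2

lemma g0_mem (φ : CircleGraph ≃g CircleGraph) {p : S1} {C : Chord} (hp : (p : ℂ) ∈ C.1) :
    (g0 φ p : ℂ) ∈ (φ C).1 := by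
  by_cases h1 : C = K1 p
  · rw [h1]; exact g0_spec₁ φ p
  by_cases h2 : C = K2 p
  · rw [h2]; exact g0_spec₂ φ p
  obtain ⟨w, hw1, hw2, hw3⟩ := concur_map φ (K1_ne_K2 p) (Ne.symm h1) (Ne.symm h2)
    (Sym2.mem_mk_left _ _) (Sym2.mem_mk_left _ _) hp
  have hφne : φ (K1 p) ≠ φ (K2 p) := fun hc => K1_ne_K2 p (φ.toEquiv.injective hc)
  have hwg : w = g0 φ p := shared_unique hφne hw1 hw2 (g0_spec₁ φ p) (g0_spec₂ φ p)
  rw [← hwg]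
  exact hw3

lemma g0_inv (φ : CircleGraph ≃g CircleGraph) (p : S1) : g0 φ.symm (g0 φ p) = p := by
  have h1 : (g0 φ.symm (g0 φ p) : ℂ) ∈ (φ.symm (φ (K1 p))).1 := g0_mem φ.symm (g0_spec₁ φ p)
  have h2 : (g0 φ.symm (g0 φ p) : ℂ) ∈ (φ.symm (φ (K2 p))).1 := g0_mem φ.symm (g0_spec₂ φ p)
  rw [φ.symm_apply_apply] at h1 h2
  exact Subtype.ext (shared_unique (K1_ne_K2 p) h1 h2 (Sym2.mem_mk_left _ _)
    (Sym2.mem_mk_left _ _))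

def g0equiv (φ : CircleGraph ≃g CircleGraph) : S1 ≃ S1 where
  toFun := g0 φ
  invFun := g0 φ.symm
  left_inv := g0_inv φ
  right_inv := fun q => by
    have h := g0_inv φ.symm q
    rwa [show φ.symm.symm = φ from rfl] at h

lemma g0_coe_inj (φ : CircleGraph ≃g CircleGraph) {a b : S1}
    (h : (g0 φ a : ℂ) = g0 φ b) : (a : ℂ) = b := by
  have h' : g0 φ a = g0 φ b := Subtype.ext h
  have := congrArg (g0 φ.symm) h'
  rw [g0_inv, g0_inv] at this
  rw [this]

lemma phi_chord (φ : CircleGraph ≃g CircleGraph) {C : Chord} {a b : S1}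
    (hC : C.1 = s((a : ℂ), (b : ℂ))) :
    (φ C).1 = s((g0 φ a : ℂ), (g0 φ b : ℂ)) := by
  have hab : (a : ℂ) ≠ b := by
    intro h
    apply C.2.2
    rw [hC, h]
    exact Sym2.mk_isDiag_iff.2 rfl
  have ha : (a : ℂ) ∈ C.1 := by rw [hC]; exact Sym2.mem_mk_left _ _
  have hb : (b : ℂ) ∈ C.1 := by rw [hC]; exact Sym2.mem_mk_right _ _
  have hne : (g0 φ a : ℂ) ≠ g0 φ b := fun h => hab (g0_coe_inj φ h)
  exact sym2_eq_of_mem hne (g0_mem φ ha) (g0_mem φ hb)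

lemma g0_sep (φ : CircleGraph ≃g CircleGraph) {a b c d : S1}
    (hab : (a:ℂ) ≠ b) (hcd : (c:ℂ) ≠ d) (hac : (a:ℂ) ≠ c) (had : (a:ℂ) ≠ d)
    (hbc : (b:ℂ) ≠ c) (hbd : (b:ℂ) ≠ d) :
    xf a b c * xf a b d < 0 ↔
      xf (g0 φ a) (g0 φ b) (g0 φ c) * xf (g0 φ a) (g0 φ b) (g0 φ d) < 0 := by
  have gab : (g0 φ a : ℂ) ≠ g0 φ b := fun h => hab (g0_coe_inj φ h)
  have gcd : (g0 φ c : ℂ) ≠ g0 φ d := fun h => hcd (g0_coe_inj φ h)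
  have gac : (g0 φ a : ℂ) ≠ g0 φ c := fun h => hac (g0_coe_inj φ h)
  have gad : (g0 φ a : ℂ) ≠ g0 φ d := fun h => had (g0_coe_inj φ h)
  have gbc : (g0 φ b : ℂ) ≠ g0 φ c := fun h => hbc (g0_coe_inj φ h)
  have gbd : (g0 φ b : ℂ) ≠ g0 φ d := fun h => hbd (g0_coe_inj φ h)
  rw [← adj_iff_sep (ha := a.2) (hb := b.2) (hc := c.2) (hd := d.2)
    (hab := hab) (hcd := hcd) hac had hbc hbd]
  rw [← adj_iff_sep (ha := (g0 φ a).2) (hb := (g0 φ b).2) (hc := (g0 φ c).2)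
    (hd := (g0 φ d).2) (hab := gab) (hcd := gcd) gac gad gbc gbd]
  rw [show mk2 (g0 φ a : ℂ) (g0 φ b : ℂ) (g0 φ a).2 (g0 φ b).2 gab
      = φ (mk2 (a:ℂ) (b:ℂ) a.2 b.2 hab) from (chord_ext (phi_chord φ rfl)).symm]
  rw [show mk2 (g0 φ c : ℂ) (g0 φ d : ℂ) (g0 φ c).2 (g0 φ d).2 gcd
      = φ (mk2 (c:ℂ) (d:ℂ) c.2 d.2 hcd) from (chord_ext (phi_chord φ rfl)).symm]
  exact (φ.map_adj_iff).symm

/-! ### Topology: arcs are connected, sides form a neighbourhood basis -/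

lemma e_continuous : Continuous e := by
  unfold e
  fun_prop

def eS (θ : ℝ) : S1 := ⟨e θ, e_mem θ⟩

lemma eS_continuous : Continuous eS := e_continuous.subtype_mk _

lemma xf_continuous (a b : ℂ) : Continuous (fun z => xf a b z) := by
  unfold xf
  fun_prop

lemma xf_self (a b : ℂ) : xf a b a = 0 := by simpa using xf_line a b 0

lemma xf_self' (a b : ℂ) : xf a b b = 0 := by simpa using xf_line a b 1

/-- Two points strictly on the same side of a chord lie in a connected subset of the
circle avoiding the chord's line. -/
lemma same_side_connected {a b z w : S1} (hab : (a:ℂ) ≠ b) (hza : (z:ℂ) ≠ a) (hzb : (z:ℂ) ≠ b)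
    (hwa : (w:ℂ) ≠ a) (hwb : (w:ℂ) ≠ b)
    (hsame : 0 < xf a b z * xf a b w) :
    ∃ M : Set S1, IsPreconnected M ∧ z ∈ M ∧ w ∈ M ∧
      ∀ x ∈ M, xf a b (x:ℂ) ≠ 0 := by
  obtain ⟨α, hα01, hαa⟩ := exists_rep a.2 0
  obtain ⟨β, hβ, hβb⟩ := exists_rep' b.2 (show (b:ℂ) ≠ e α by rw [hαa]; exact fun h => hab h.symm)
  obtain ⟨ζ, hζ, hζz⟩ := exists_rep' z.2 (show (z:ℂ) ≠ e α by rw [hαa]; exact hza)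
  obtain ⟨ω, hω, hωw⟩ := exists_rep' w.2 (show (w:ℂ) ≠ e α by rw [hαa]; exact hwa)
  have hζβ : ζ ≠ β := fun h => hzb (by rw [← hζz, ← hβb, h])
  have hωβ : ω ≠ β := fun h => hwb (by rw [← hωw, ← hβb, h])
  have hns : ¬ (xf (e α) (e β) (e ζ) * xf (e α) (e β) (e ω) < 0) := by
    rw [hαa, hβb, hζz, hωw]
    linarith
  rw [sep_window hβ hζ hω] at hns
  push_neg at hns
  have hsign : (ζ < β ∧ ω < β) ∨ (β < ζ ∧ β < ω) := by
    rcases lt_or_gt_of_ne hζβ with h1 | h1 <;> rcases lt_or_gt_of_ne hωβ with h2 | h2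
    · exact Or.inl ⟨h1, h2⟩
    · exfalso; nlinarith
    · exfalso; nlinarith
    · exact Or.inr ⟨h1, h2⟩
  have key : ∀ (l r : ℝ), Set.Ioo l r ⊆ Set.Ioo α (α + 2*π) → (∀ θ ∈ Set.Ioo l r, θ ≠ β) →
      ζ ∈ Set.Ioo l r → ω ∈ Set.Ioo l r →
      ∃ M : Set S1, IsPreconnected M ∧ z ∈ M ∧ w ∈ M ∧ ∀ x ∈ M, xf a b (x:ℂ) ≠ 0 := by
    intro l r hsub hneβ hζm hωm
    refine ⟨eS '' Set.Ioo l r, (isPreconnected_Ioo).image _ eS_continuous.continuousOn,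
      ⟨ζ, hζm, Subtype.ext hζz⟩, ⟨ω, hωm, Subtype.ext hωw⟩, ?_⟩
    rintro x ⟨θ, hθm, rfl⟩
    have hθ : θ ∈ Set.Ioo α (α + 2*π) := hsub hθm
    show xf a b (e θ) ≠ 0
    rw [← hαa, ← hβb]
    intro hc
    rcases (xf_zero_iff (e_mem α) (e_mem β) (e_mem θ) (e_base_ne hβ)).1 hc with h | h
    · exact e_base_ne hθ h.symm
    · exact e_ne_window hθ hβ (hneβ θ hθm) h
  rcases hsign with ⟨h1, h2⟩ | ⟨h1, h2⟩
  · exact key α β (fun x hx => ⟨hx.1, lt_trans hx.2 hβ.2⟩) (fun θ hθ => ne_of_lt hθ.2)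
      ⟨hζ.1, h1⟩ ⟨hω.1, h2⟩
  · exact key β (α + 2*π) (fun x hx => ⟨lt_trans hβ.1 hx.1, hx.2⟩)
      (fun θ hθ => ne_of_gt hθ.1) ⟨h1, hζ.2⟩ ⟨h2, hω.2⟩

/-- A homeomorphism of the circle preserves strict separation. -/
lemma homeo_sep (g : S1 ≃ₜ S1) {a b c d : S1}
    (hab : (a:ℂ) ≠ b) (hcd : (c:ℂ) ≠ d) (hac : (a:ℂ) ≠ c) (had : (a:ℂ) ≠ d)
    (hbc : (b:ℂ) ≠ c) (hbd : (b:ℂ) ≠ d)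
    (hsep : xf a b c * xf a b d < 0) :
    xf (g a) (g b) (g c) * xf (g a) (g b) (g d) < 0 := by
  have gne : ∀ {x y : S1}, (x:ℂ) ≠ y → ((g x : S1) : ℂ) ≠ (g y : S1) := by
    intro x y h hc
    exact h (congrArg Subtype.val (g.toEquiv.injective (Subtype.ext hc)))
  by_contra hns
  have h1 : xf (g a) (g b) (g c) ≠ 0 := by
    rw [Ne, xf_zero_iff (g a).2 (g b).2 (g c).2 (gne hab)]
    push_neg
    exact ⟨fun h => (gne hac) h.symm, fun h => (gne hbc) h.symm⟩
  have h2 : xf (g a) (g b) (g d) ≠ 0 := by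
    rw [Ne, xf_zero_iff (g a).2 (g b).2 (g d).2 (gne hab)]
    push_neg
    exact ⟨fun h => (gne had) h.symm, fun h => (gne hbd) h.symm⟩
  have hpos : 0 < xf (g a) (g b) (g c) * xf (g a) (g b) (g d) :=
    lt_of_le_of_ne (not_lt.1 hns) (Ne.symm (mul_ne_zero h1 h2))
  obtain ⟨M, hM, hgc, hgd, hMne⟩ := same_side_connected (gne hab) (Ne.symm (gne hac))
    (Ne.symm (gne hbc)) (Ne.symm (gne had)) (Ne.symm (gne hbd)) hpos
  set N : Set S1 := ⇑g.symm '' M with hN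
  have hNconn : IsPreconnected N := hM.image _ g.symm.continuous.continuousOn
  have hcN : c ∈ N := ⟨g c, hgc, g.symm_apply_apply c⟩
  have hdN : d ∈ N := ⟨g d, hgd, g.symm_apply_apply d⟩
  have hcont : ContinuousOn (fun x : S1 => xf a b (x:ℂ)) N :=
    ((xf_continuous (a:ℂ) (b:ℂ)).comp continuous_subtype_val).continuousOn
  have himg : IsPreconnected ((fun x : S1 => xf a b (x:ℂ)) '' N) := hNconn.image _ hcont
  have hord := himg.ordConnected
  have h0 : (0:ℝ) ∈ (fun x : S1 => xf a b (x:ℂ)) '' N := by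
    have hc' : xf a b (c:ℂ) ∈ (fun x : S1 => xf a b (x:ℂ)) '' N :=
      Set.mem_image_of_mem (fun x : S1 => xf a b (x:ℂ)) hcN
    have hd' : xf a b (d:ℂ) ∈ (fun x : S1 => xf a b (x:ℂ)) '' N :=
      Set.mem_image_of_mem (fun x : S1 => xf a b (x:ℂ)) hdN
    rcases mul_neg_iff.1 hsep with ⟨hp, hn⟩ | ⟨hn, hp⟩
    · exact hord.out hd' hc' ⟨le_of_lt hn, le_of_lt hp⟩
    · exact hord.out hc' hd' ⟨le_of_lt hn, le_of_lt hp⟩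
  obtain ⟨x, hxN, hx0⟩ := h0
  obtain ⟨m, hmM, hmx⟩ := hxN
  rcases (xf_zero_iff a.2 b.2 x.2 hab).1 hx0 with h | h
  · have hxa : x = a := Subtype.ext h
    have : m = g a := by rw [← hxa, ← hmx]; simp
    apply hMne m hmM
    rw [this, xf_self]
  · have hxb : x = b := Subtype.ext h
    have : m = g b := by rw [← hxb, ← hmx]; simp
    apply hMne m hmM
    rw [this, xf_self']

lemma xf_S1_ne_zero {u v x : S1} (huv : (u:ℂ) ≠ v) (hxu : x ≠ u) (hxv : x ≠ v) :
    xf u v (x:ℂ) ≠ 0 := by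
  rw [Ne, xf_zero_iff u.2 v.2 x.2 huv]
  push_neg
  exact ⟨fun h => hxu (Subtype.ext h), fun h => hxv (Subtype.ext h)⟩

/-- "Sides of chords" form a neighbourhood basis on the circle. -/
lemma side_basis (q : S1) {U : Set S1} (hU : U ∈ nhds q) :
    ∃ u v : S1, (u:ℂ) ≠ v ∧ (q:ℂ) ≠ u ∧ (q:ℂ) ≠ v ∧
      {x : S1 | 0 < xf u v q * xf u v (x:ℂ)} ⊆ U := by
  obtain ⟨θ, hθ01, hθq⟩ := exists_rep q.2 0
  have heq : eS θ = q := Subtype.ext hθq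
  have hpre : eS ⁻¹' U ∈ nhds θ :=
    eS_continuous.continuousAt (x := θ) (by rw [heq]; exact hU)
  obtain ⟨δ, hδ0, hδ⟩ := Metric.mem_nhds_iff.1 hpre
  have hπ := Real.pi_pos
  set ε := min (δ/2) (π/2) with hε
  have hε0 : 0 < ε := lt_min (by linarith) (by linarith)
  have hεδ : ε < δ := lt_of_le_of_lt (min_le_left _ _) (by linarith)
  have hεπ : ε ≤ π/2 := min_le_right _ _
  set α := θ - ε with hα
  set β := θ + ε with hβdef
  have hβw : β ∈ Set.Ioo α (α + 2*π) := ⟨by simp [hα, hβdef]; linarith, by simp [hα, hβdef]; linarith⟩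
  have hθw : θ ∈ Set.Ioo α (α + 2*π) := ⟨by simp [hα]; linarith, by simp [hα]; linarith⟩
  have hqeθ : (q:ℂ) = e θ := hθq.symm
  refine ⟨eS α, eS β, ?_, ?_, ?_, ?_⟩
  · exact e_ne_of_window (by intro h; simp [hα, hβdef] at h; linarith)
      (by rw [abs_lt]; constructor <;> simp [hα, hβdef] <;> linarith)
  · rw [hqeθ]
    exact e_ne_of_window (by intro h; simp [hα] at h; linarith)
      (by rw [abs_lt]; constructor <;> simp [hα] <;> linarith)
  · rw [hqeθ]
    exact e_ne_of_window (by intro h; simp [hβdef] at h; linarith)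
      (by rw [abs_lt]; constructor <;> simp [hβdef] <;> linarith)
  · intro x hx
    simp only [Set.mem_setOf_eq,
      show ((eS α : S1):ℂ) = e α from rfl, show ((eS β : S1):ℂ) = e β from rfl] at hx
    obtain ⟨c, hc, hfq⟩ := xf_window_sign hβw hθw
    have hsinq : Real.sin ((θ - β)/2) < 0 := by
      have h1 : Real.sin ((β - θ)/2) > 0 := by
        apply sin_half_pos
        · simp [hβdef]; linarith
        · simp [hβdef]; linarith
      have : (θ - β)/2 = -((β - θ)/2) := by ring
      rw [this, Real.sin_neg]
      linarith
    have hfqneg : xf (e α) (e β) (q:ℂ) < 0 := by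
      rw [hqeθ, hfq]
      nlinarith
    rw [hqeθ] at hx
    have hfxneg : xf (e α) (e β) (x:ℂ) < 0 := by
      rw [hfq] at hx
      by_contra hcon
      push_neg at hcon
      have hcs : c * Real.sin ((θ - β)/2) < 0 := mul_neg_of_pos_of_neg hc hsinq
      nlinarith
    have hxea : (x:ℂ) ≠ e α := by
      intro h
      rw [h, xf_self] at hfxneg
      linarith
    obtain ⟨ζ, hζw, hζx⟩ := exists_rep' x.2 hxea
    rw [← hζx] at hfxneg
    obtain ⟨c', hc', hfx⟩ := xf_window_sign hβw hζw
    have hζβ : ζ < β := by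
      rcases lt_trichotomy ζ β with h | h | h
      · exact h
      · exfalso
        rw [hfx, h] at hfxneg
        simp at hfxneg
      · exfalso
        have hsp : Real.sin ((ζ - β)/2) > 0 := by
          apply sin_half_pos
          · linarith
          · have h2 := hζw.2
            have h3 := hβw.1
            simp only [hα] at h2 h3
            simp only [hβdef]
            linarith
        rw [hfx] at hfxneg
        nlinarith
    have hζball : ζ ∈ Metric.ball θ δ := by
      rw [Metric.mem_ball, Real.dist_eq, abs_lt]
      have h1 := hζw.1
      simp [hα] at h1
      constructor <;> [linarith; (simp [hβdef] at hζβ; linarith)]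
    have : eS ζ ∈ U := hδ hζball
    rwa [show eS ζ = x from Subtype.ext hζx] at this

lemma continuous_of_sep (G : S1 ≃ S1)
    (hsep : ∀ a b c d : S1, (a:ℂ) ≠ b → (c:ℂ) ≠ d → (a:ℂ) ≠ c → (a:ℂ) ≠ d →
      (b:ℂ) ≠ c → (b:ℂ) ≠ d →
      (xf a b c * xf a b d < 0 ↔
        xf (G a) (G b) (G c) * xf (G a) (G b) (G d) < 0)) :
    Continuous (G : S1 → S1) := by
  rw [continuous_iff_continuousAt]
  intro p
  intro U hU
  rw [Filter.mem_map]
  obtain ⟨u, v, huv, hqu, hqv, hsub⟩ := side_basis (G p) hU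
  set u' := G.symm u with hu'
  set v' := G.symm v with hv'
  have hGu : G u' = u := G.apply_symm_apply u
  have hGv : G v' = v := G.apply_symm_apply v
  have hu'v's : u' ≠ v' := by
    intro h
    apply huv
    rw [← hGu, ← hGv, h]
  have hu'v' : (u':ℂ) ≠ v' := fun h => hu'v's (Subtype.ext h)
  have hpu' : p ≠ u' := by
    intro h
    apply hqu
    rw [h, ← hGu]
  have hpv' : p ≠ v' := by
    intro h
    apply hqv
    rw [h, ← hGv]
  have hGpu : G p ≠ u := fun h => hqu (by rw [h])
  have hGpv : G p ≠ v := fun h => hqv (by rw [h])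
  have key : ∀ x : S1, (0 < xf u' v' p * xf u' v' (x:ℂ)) ↔
      (0 < xf u v (G p) * xf u v ((G x : S1):ℂ)) := by
    intro x
    by_cases hxu : x = u'
    · rw [hxu]
      constructor <;> intro h <;> exfalso
      · rw [xf_self] at h; linarith
      · rw [hGu, xf_self] at h; linarith
    by_cases hxv : x = v'
    · rw [hxv]
      constructor <;> intro h <;> exfalso
      · rw [xf_self'] at h; linarith
      · rw [hGv, xf_self'] at h; linarith
    by_cases hxp : x = p
    · rw [hxp]
      have h1 : xf u' v' (p:ℂ) ≠ 0 := xf_S1_ne_zero hu'v' hpu' hpv'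
      have h2 : xf u v ((G p : S1):ℂ) ≠ 0 := xf_S1_ne_zero huv hGpu hGpv
      constructor <;> intro _ <;> [exact mul_self_pos.2 h2; exact mul_self_pos.2 h1]
    · have hpx : (p:ℂ) ≠ x := fun h => hxp (Subtype.ext h.symm)
      have hu'x : (u':ℂ) ≠ x := fun h => hxu (Subtype.ext h.symm)
      have hv'x : (v':ℂ) ≠ x := fun h => hxv (Subtype.ext h.symm)
      have hu'p : (u':ℂ) ≠ p := fun h => hpu' (Subtype.ext h.symm)
      have hv'p : (v':ℂ) ≠ p := fun h => hpv' (Subtype.ext h.symm)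
      have iff1 := hsep u' v' p x hu'v' hpx hu'p hu'x hv'p hv'x
      rw [hGu, hGv] at iff1
      have hGne : ∀ {y z : S1}, (y:ℂ) ≠ z → ((G y : S1):ℂ) ≠ (G z : S1) := by
        intro y z h hc
        exact h (congrArg Subtype.val (G.injective (Subtype.ext hc)))
      have n1 : xf u' v' (p:ℂ) ≠ 0 := xf_S1_ne_zero hu'v' hpu' hpv'
      have n2 : xf u' v' (x:ℂ) ≠ 0 :=
        xf_S1_ne_zero hu'v' (fun h => hxu h) (fun h => hxv h)
      have n3 : xf u v ((G p : S1):ℂ) ≠ 0 := xf_S1_ne_zero huv hGpu hGpv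
      have n4 : xf u v ((G x : S1):ℂ) ≠ 0 := by
        apply xf_S1_ne_zero huv
        · intro h
          apply hxu
          have h2 := congrArg G.symm h
          rw [G.symm_apply_apply] at h2
          rw [h2, hu']
        · intro h
          apply hxv
          have h2 := congrArg G.symm h
          rw [G.symm_apply_apply] at h2
          rw [h2, hv']
      constructor
      · intro h
        have hne : ¬ (xf u' v' (p:ℂ) * xf u' v' (x:ℂ) < 0) := by linarith
        have := (not_iff_not.2 iff1).1 hne
        rcases lt_trichotomy (xf u v ((G p : S1):ℂ) * xf u v ((G x : S1):ℂ)) 0 with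
          h' | h' | h'
        · exact absurd h' this
        · exact absurd (mul_eq_zero.1 h') (by push_neg; exact ⟨n3, n4⟩)
        · exact h'
      · intro h
        have hne : ¬ (xf u v ((G p : S1):ℂ) * xf u v ((G x : S1):ℂ) < 0) := by linarith
        have := (not_iff_not.2 iff1).2 hne
        rcases lt_trichotomy (xf u' v' (p:ℂ) * xf u' v' (x:ℂ)) 0 with h' | h' | h'
        · exact absurd h' this
        · exact absurd (mul_eq_zero.1 h') (by push_neg; exact ⟨n1, n2⟩)
        · exact h'
  have hset : (fun x => (G x : S1)) ⁻¹' {x : S1 | 0 < xf u v (G p) * xf u v (x:ℂ)} =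
      {x : S1 | 0 < xf u' v' p * xf u' v' (x:ℂ)} := by
    ext x
    exact (key x).symm
  apply Filter.mem_of_superset (x := {x : S1 | 0 < xf u' v' p * xf u' v' (x:ℂ)})
  · apply IsOpen.mem_nhds
    · have : Continuous (fun x : S1 => xf u' v' p * xf u' v' (x:ℂ)) :=
        continuous_const.mul ((xf_continuous _ _).comp continuous_subtype_val)
      exact isOpen_lt continuous_const this
    · exact mul_self_pos.2 (xf_S1_ne_zero hu'v' hpu' hpv')
  · rw [← hset]
    exact fun x hx => hsub hx

def ghomeo (φ : CircleGraph ≃g CircleGraph) : S1 ≃ₜ S1 where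
  toEquiv := g0equiv φ
  continuous_toFun := continuous_of_sep (g0equiv φ)
    (fun a b c d h1 h2 h3 h4 h5 h6 => g0_sep φ h1 h2 h3 h4 h5 h6)
  continuous_invFun := continuous_of_sep (g0equiv φ).symm
    (fun a b c d h1 h2 h3 h4 h5 h6 => g0_sep φ.symm h1 h2 h3 h4 h5 h6)

/-! ### The canonical map from homeomorphisms to graph automorphisms -/

open Classical in
def gext (g : S1 ≃ₜ S1) : ℂ → ℂ := fun z => if h : z ∈ S1 then ((g ⟨z, h⟩ : S1) : ℂ) else z

lemma gext_coe (g : S1 ≃ₜ S1) (p : S1) : gext g (p : ℂ) = ((g p : S1) : ℂ) := by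
  rw [gext]
  simp only [dif_pos p.2, Subtype.coe_eta]

lemma gext_mem (g : S1 ≃ₜ S1) {z : ℂ} (h : z ∈ S1) : gext g z ∈ S1 := by
  rw [gext, dif_pos h]
  exact (g ⟨z, h⟩).2

lemma homeo_coe_ne (g : S1 ≃ₜ S1) {x y : S1} (h : (x:ℂ) ≠ y) : ((g x : S1):ℂ) ≠ (g y : S1) :=
  fun hc => h (congrArg Subtype.val (g.toEquiv.injective (Subtype.ext hc)))

def cmap (g : S1 ≃ₜ S1) (C : Chord) : Chord :=
  ⟨Sym2.map (gext g) C.1, by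
    constructor
    · intro z hz
      rw [Sym2.mem_map] at hz
      obtain ⟨y, hy, rfl⟩ := hz
      exact gext_mem g (C.2.1 y hy)
    · intro hd
      obtain ⟨a, b, ha, hb, hab, rfl⟩ := chord_cases C
      rw [mk2_fst, Sym2.map_pair_eq, Sym2.mk_isDiag_iff] at hd
      apply hab
      rw [show gext g a = ((g ⟨a, ha⟩ : S1):ℂ) by rw [gext, dif_pos ha],
        show gext g b = ((g ⟨b, hb⟩ : S1):ℂ) by rw [gext, dif_pos hb]] at hd
      exact congrArg Subtype.val (g.toEquiv.injective (Subtype.ext hd))⟩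

lemma cmap_chord (g : S1 ≃ₜ S1) {C : Chord} {a b : S1} (hC : C.1 = s((a:ℂ), (b:ℂ))) :
    (cmap g C).1 = s(((g a : S1):ℂ), ((g b : S1):ℂ)) := by
  show Sym2.map (gext g) C.1 = _
  rw [hC, Sym2.map_pair_eq, gext_coe, gext_coe]

lemma gext_gext (g : S1 ≃ₜ S1) (z : ℂ) (hz : z ∈ S1) : gext g.symm (gext g z) = z := by
  rw [show gext g z = ((g ⟨z, hz⟩ : S1):ℂ) by rw [gext, dif_pos hz], gext_coe]
  rw [show g.symm (g ⟨z, hz⟩) = ⟨z, hz⟩ from g.symm_apply_apply _]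

lemma cmap_symm (g : S1 ≃ₜ S1) (C : Chord) : cmap g.symm (cmap g C) = C := by
  apply chord_ext
  show Sym2.map (gext g.symm) (Sym2.map (gext g) C.1) = C.1
  obtain ⟨a, b, ha, hb, hab, rfl⟩ := chord_cases C
  rw [mk2_fst, Sym2.map_pair_eq, Sym2.map_pair_eq, gext_gext g a ha, gext_gext g b hb]

lemma cmap_inj (g : S1 ≃ₜ S1) {C D : Chord} (h : cmap g C = cmap g D) : C = D := by
  rw [← cmap_symm g C, h, cmap_symm]

lemma cmap_adj_forward (g : S1 ≃ₜ S1) {C D : Chord} (h : CircleGraph.Adj C D) :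
    CircleGraph.Adj (cmap g C) (cmap g D) := by
  obtain ⟨a, b, ha, hb, hab, rfl⟩ := chord_cases C
  obtain ⟨c, d, hc, hd, hcd, rfl⟩ := chord_cases D
  have hne : cmap g (mk2 a b ha hb hab) ≠ cmap g (mk2 c d hc hd hcd) :=
    fun hc' => h.1 (cmap_inj g hc')
  by_cases hsh : a = c ∨ a = d ∨ b = c ∨ b = d
  · -- shared endpoint: images share the image endpoint
    have hshared : ∃ z, z ∈ (mk2 a b ha hb hab).1 ∧ z ∈ (mk2 c d hc hd hcd).1 := by
      rcases hsh with h' | h' | h' | h'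
      · exact ⟨a, Sym2.mem_mk_left _ _, by rw [mk2_fst, h']; exact Sym2.mem_mk_left _ _⟩
      · exact ⟨a, Sym2.mem_mk_left _ _, by rw [mk2_fst, h']; exact Sym2.mem_mk_right _ _⟩
      · exact ⟨b, Sym2.mem_mk_right _ _, by rw [mk2_fst, h']; exact Sym2.mem_mk_left _ _⟩
      · exact ⟨b, Sym2.mem_mk_right _ _, by rw [mk2_fst, h']; exact Sym2.mem_mk_right _ _⟩
    obtain ⟨z, hz1, hz2⟩ := hshared
    apply adj_of_touch hne (z := gext g z)
    · exact Sym2.mem_map.2 ⟨z, hz1, rfl⟩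
    · exact Sym2.mem_map.2 ⟨z, hz2, rfl⟩
  · push_neg at hsh
    obtain ⟨h1, h2, h3, h4⟩ := hsh
    have hsep := (adj_iff_sep h1 h2 h3 h4).1 h
    set ta : S1 := ⟨a, ha⟩
    set tb : S1 := ⟨b, hb⟩
    set tc : S1 := ⟨c, hc⟩
    set td : S1 := ⟨d, hd⟩
    have hsep' := homeo_sep g (a := ta) (b := tb) (c := tc) (d := td)
      hab hcd h1 h2 h3 h4 hsep
    have e1 : cmap g (mk2 a b ha hb hab)
        = mk2 ((g ta : S1):ℂ) ((g tb : S1):ℂ) (g ta).2 (g tb).2 (homeo_coe_ne g hab) :=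
      chord_ext (cmap_chord g rfl)
    have e2 : cmap g (mk2 c d hc hd hcd)
        = mk2 ((g tc : S1):ℂ) ((g td : S1):ℂ) (g tc).2 (g td).2 (homeo_coe_ne g hcd) :=
      chord_ext (cmap_chord g rfl)
    rw [e1, e2]
    exact (adj_iff_sep (homeo_coe_ne g h1) (homeo_coe_ne g h2)
      (homeo_coe_ne g h3) (homeo_coe_ne g h4)).2 hsep'

lemma cmap_adj_iff (g : S1 ≃ₜ S1) (C D : Chord) :
    CircleGraph.Adj (cmap g C) (cmap g D) ↔ CircleGraph.Adj C D := by
  constructor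
  · intro h
    have := cmap_adj_forward g.symm h
    rwa [cmap_symm, cmap_symm] at this
  · exact cmap_adj_forward g

def cequiv (g : S1 ≃ₜ S1) : Chord ≃ Chord where
  toFun := cmap g
  invFun := cmap g.symm
  left_inv := cmap_symm g
  right_inv := fun C => by
    have := cmap_symm g.symm C
    rwa [Homeomorph.symm_symm] at this

def Pi0 (g : S1 ≃ₜ S1) : CircleGraph ≃g CircleGraph where
  toEquiv := cequiv g
  map_rel_iff' := fun {C D} => cmap_adj_iff g C D

end CG

/-- The map `π` sending each homeomorphism `g` of the circle to the
induced permutation of chords is a group isomorphism from `Aut(S¹)` onto `Aut(𝒞)`: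
it sends the chord with endpoints `x, y` to the chord with endpoints `g x, g y`,
it turns composition of homeomorphisms into composition of graph automorphisms,
and it is bijective. -/
theorem circleGraph_aut_eq_circle_homeo :
    ∃ π : (S1 ≃ₜ S1) → (CircleGraph ≃g CircleGraph),
      (∀ (g : S1 ≃ₜ S1) (a b : S1) (C : Chord),
        C.1 = s((a : ℂ), (b : ℂ)) → (π g C).1 = s((g a : ℂ), (g b : ℂ))) ∧
      (∀ f g : S1 ≃ₜ S1, π (f.trans g) = (π f).trans (π g)) ∧
      Function.Bijective π := by
  classical
  refine ⟨CG.Pi0, ?_, ?_, ?_, ?_⟩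
  · intro g a b C hC
    exact CG.cmap_chord g hC
  · intro f g
    apply RelIso.ext
    intro C
    apply CG.chord_ext
    obtain ⟨a, b, ha, hb, hab, rfl⟩ := CG.chord_cases C
    set ta : S1 := ⟨a, ha⟩
    set tb : S1 := ⟨b, hb⟩
    have l1 : ((CG.Pi0 (f.trans g)) (CG.mk2 a b ha hb hab)).1
        = s((((f.trans g) ta : S1):ℂ), (((f.trans g) tb : S1):ℂ)) :=
      CG.cmap_chord (f.trans g) rfl
    have l2 : ((CG.Pi0 f) (CG.mk2 a b ha hb hab)).1
        = s(((f ta : S1):ℂ), ((f tb : S1):ℂ)) := CG.cmap_chord f rfl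
    have l3 : (((CG.Pi0 f).trans (CG.Pi0 g)) (CG.mk2 a b ha hb hab)).1
        = s(((g (f ta) : S1):ℂ), ((g (f tb) : S1):ℂ)) := CG.cmap_chord g l2
    rw [l1, l3]
    rfl
  · intro f g h
    apply Homeomorph.ext
    intro p
    set np : S1 := ⟨-(p:ℂ), CG.neg_mem_S1 p.2⟩
    set ip : S1 := ⟨Complex.I * (p:ℂ), CG.I_mul_mem_S1 p.2⟩
    have e1 : ((CG.Pi0 f) (CG.K1 p)).1 = s(((f p : S1):ℂ), ((f np : S1):ℂ)) :=
      CG.cmap_chord f rfl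
    have e2 : ((CG.Pi0 g) (CG.K1 p)).1 = s(((g p : S1):ℂ), ((g np : S1):ℂ)) :=
      CG.cmap_chord g rfl
    have e3 : ((CG.Pi0 f) (CG.K2 p)).1 = s(((f p : S1):ℂ), ((f ip : S1):ℂ)) :=
      CG.cmap_chord f rfl
    have e4 : ((CG.Pi0 g) (CG.K2 p)).1 = s(((g p : S1):ℂ), ((g ip : S1):ℂ)) :=
      CG.cmap_chord g rfl
    have k1 : s(((f p : S1):ℂ), ((f np : S1):ℂ)) = s(((g p : S1):ℂ), ((g np : S1):ℂ)) := by
      rw [← e1, ← e2, h]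
    have k2 : s(((f p : S1):ℂ), ((f ip : S1):ℂ)) = s(((g p : S1):ℂ), ((g ip : S1):ℂ)) := by
      rw [← e3, ← e4, h]
    have hnip : ((g np : S1):ℂ) ≠ ((g ip : S1):ℂ) := by
      apply CG.homeo_coe_ne
      show -(p:ℂ) ≠ Complex.I * (p:ℂ)
      exact CG.neg_ne_I_mul p.2
    rcases Sym2.eq_iff.1 k1 with ⟨hfp, _⟩ | ⟨hfp, hfn⟩
    · exact Subtype.ext hfp
    · rcases Sym2.eq_iff.1 k2 with ⟨hfp', _⟩ | ⟨hfp', _⟩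
      · exact Subtype.ext hfp'
      · exfalso
        exact hnip (by rw [← hfp, ← hfp'])
  · intro φ
    refine ⟨CG.ghomeo φ, ?_⟩
    apply RelIso.ext
    intro C
    apply CG.chord_ext
    obtain ⟨a, b, ha, hb, hab, rfl⟩ := CG.chord_cases C
    set ta : S1 := ⟨a, ha⟩
    set tb : S1 := ⟨b, hb⟩
    have l1 : ((CG.Pi0 (CG.ghomeo φ)) (CG.mk2 a b ha hb hab)).1
        = s((((CG.ghomeo φ) ta : S1):ℂ), (((CG.ghomeo φ) tb : S1):ℂ)) :=
      CG.cmap_chord (CG.ghomeo φ) rfl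
    have l2 : (φ (CG.mk2 a b ha hb hab)).1
        = s(((CG.g0 φ ta : S1):ℂ), ((CG.g0 φ tb : S1):ℂ)) := CG.phi_chord φ rfl
    rw [l1, l2]
    rfl
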